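/- arXiv:2501.06902 — 7 statements merged into one kernel-verified Lean document; each statement's English description precedes it below -/
import Mathlib

section
/- If T and T' are trees of respective orders n and n' with 2 ≤ n < n', then f(T □ T') = n·n' − n + 1 if and only if T' is isomorphic to the star S_{n'} (with T arbitrary). -/
open SimpleGraph

/-- The star `S_m = K_{1,m-1}` on `m` vertices, with center the vertex `0`. -/
def starGraph (m : ℕ) : SimpleGraph (Fin m) where
  Adj i j := i ≠ j ∧ (i.val = 0 ∨ j.val = 0)
  symm := ⟨fun _ _ h => ⟨h.1.symm, h.2.symm⟩⟩
  loopless := ⟨fun _ h => h.1 rfl⟩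

/-- The decycling number: the minimum size of a set of vertices whose removal
leaves an acyclic graph. -/
noncomputable def decyclingNumber {V : Type*} [Fintype V] (G : SimpleGraph V) : ℕ :=
  sInf {k | ∃ S : Finset V, S.card = k ∧ (G.induce ((↑S : Set V)ᶜ)).IsAcyclic}

/-- The forest number: the maximum size of a set of vertices inducing a forest. -/
noncomputable def forestNumber {V : Type*} [Fintype V] (G : SimpleGraph V) : ℕ :=
  sSup {k | ∃ S : Finset V, S.card = k ∧ (G.induce (↑S : Set V)).IsAcyclic}

/-- The matching number: the maximum size of a set of pairwise non-incident edges. -/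
noncomputable def matchingNumber {V : Type*} [Fintype V] (G : SimpleGraph V) : ℕ :=
  sSup {k | ∃ M : Finset (Sym2 V), ↑M ⊆ G.edgeSet ∧
    (M : Set (Sym2 V)).Pairwise (fun e f => ∀ v, ¬(v ∈ e ∧ v ∈ f)) ∧ M.card = k}


namespace ForestStar

variable {V W : Type*} {T : SimpleGraph V} {T' : SimpleGraph W} {K : Set (V × W)}

lemma walk_eq_of_isAcyclic {X : Type*} {G : SimpleGraph X} (hG : G.IsAcyclic) {a b : X}
    (p q : G.Walk a b) (hp : p.IsPath) (hq : q.IsPath) : p = q := by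
  have := hG.path_unique ⟨p, hp⟩ ⟨q, hq⟩
  exact congrArg Subtype.val this

def liftRow (a : V) : ∀ {x y : W} (p : T'.Walk x y)
    (h : ∀ w ∈ p.support, (a, w) ∈ K),
    ((T.boxProd T').induce K).Walk ⟨(a,x), h x p.start_mem_support⟩ ⟨(a,y), h y p.end_mem_support⟩
  | _, _, Walk.nil, _ => Walk.nil
  | _, _, Walk.cons hadj q, h =>
      Walk.cons (by exact Or.inr ⟨hadj, rfl⟩)
        (liftRow a q (fun w hw => h w (by simp [Walk.support_cons, hw])))

lemma liftRow_support (a : V) {x y : W} (p : T'.Walk x y)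
    (h : ∀ w ∈ p.support, (a, w) ∈ K) :
    (liftRow (T := T) a p h).support.map Subtype.val
      = p.support.map (fun w => (a, w)) := by
  induction p with
  | nil => simp [liftRow]
  | cons hadj q ih => exact congrArg (List.cons _) (ih _)

def liftCol (w : W) : ∀ {x y : V} (p : T.Walk x y)
    (h : ∀ v ∈ p.support, (v, w) ∈ K),
    ((T.boxProd T').induce K).Walk ⟨(x,w), h x p.start_mem_support⟩ ⟨(y,w), h y p.end_mem_support⟩
  | _, _, Walk.nil, _ => Walk.nil
  | _, _, Walk.cons hadj q, h =>
      Walk.cons (by exact Or.inl ⟨hadj, rfl⟩)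
        (liftCol w q (fun v hv => h v (by simp [Walk.support_cons, hv])))

lemma liftCol_support (w : W) {x y : V} (p : T.Walk x y)
    (h : ∀ v ∈ p.support, (v, w) ∈ K) :
    (liftCol (T' := T') w p h).support.map Subtype.val
      = p.support.map (fun v => (v, w)) := by
  induction p with
  | nil => simp [liftCol]
  | cons hadj q ih => exact congrArg (List.cons _) (ih _)

/-- Key geometric lemma: if `a ≠ b` both survive every column along a path `p` from `f1` to
`f2 ≠ f1`, and the two end columns are fully kept, then the induced graph has a cycle. -/
lemma not_acyclic_ladder
    {f1 f2 : W} (hne : f1 ≠ f2) (p : T'.Walk f1 f2) (hp : p.IsPath)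
    {a b : V} (hab : a ≠ b) (q : T.Walk a b) (hqp : q.IsPath)
    (ha : ∀ w ∈ p.support, (a, w) ∈ K) (hb : ∀ w ∈ p.support, (b, w) ∈ K)
    (h1 : ∀ v ∈ q.support, (v, f1) ∈ K) (h2 : ∀ v ∈ q.support, (v, f2) ∈ K) :
    ¬ ((T.boxProd T').induce K).IsAcyclic := by
  intro hacy
  classical
  let P : ((T.boxProd T').induce K).Walk ⟨(a,f1), ha f1 p.start_mem_support⟩
      ⟨(b,f2), h2 b q.end_mem_support⟩ := (liftRow a p ha).append (liftCol f2 q h2)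
  let Q : ((T.boxProd T').induce K).Walk ⟨(a,f1), ha f1 p.start_mem_support⟩
      ⟨(b,f2), hb f2 p.end_mem_support⟩ := (liftCol f1 q h1).append (liftRow b p hb)
  have hPsup : P.support.map Subtype.val
      = p.support.map (fun w => (a,w)) ++ (q.support.tail.map (fun v => (v,f2))) := by
    show ((liftRow a p ha).append (liftCol f2 q h2)).support.map Subtype.val = _
    rw [Walk.support_append, List.map_append, liftRow_support]
    congr 1
    rw [List.map_tail, liftCol_support (T' := T') f2 q h2, ← List.map_tail]
  have hQsup : Q.support.map Subtype.val
      = q.support.map (fun v => (v,f1)) ++ (p.support.tail.map (fun w => (b,w))) := by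
    show ((liftCol f1 q h1).append (liftRow b p hb)).support.map Subtype.val = _
    rw [Walk.support_append, List.map_append, liftCol_support]
    congr 1
    rw [List.map_tail, liftRow_support (T := T) b p hb, ← List.map_tail]
  have hPpath : P.IsPath := by
    rw [Walk.isPath_def]
    refine List.Nodup.of_map Subtype.val ?_
    rw [hPsup]
    refine List.Nodup.append ?_ ?_ ?_
    · exact hp.support_nodup.map (fun w w' e => by simpa using (Prod.ext_iff.1 e).2)
    · exact (hqp.support_nodup.sublist (List.tail_sublist _)).map
        (fun v v' e => by simpa using (Prod.ext_iff.1 e).1)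
    · intro z hz1 hz2
      obtain ⟨w, hw, rfl⟩ := List.mem_map.1 hz1
      obtain ⟨v, hv, hvz⟩ := List.mem_map.1 hz2
      rw [Prod.mk.injEq] at hvz
      have hv' : a ∈ q.support.tail := hvz.1 ▸ hv
      have hnd := hqp.support_nodup
      rw [q.support_eq_cons] at hnd
      exact (List.nodup_cons.1 hnd).1 hv'
  have hQpath : Q.IsPath := by
    rw [Walk.isPath_def]
    refine List.Nodup.of_map Subtype.val ?_
    rw [hQsup]
    refine List.Nodup.append ?_ ?_ ?_
    · exact hqp.support_nodup.map (fun v v' e => by simpa using (Prod.ext_iff.1 e).1)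
    · exact (hp.support_nodup.sublist (List.tail_sublist _)).map
        (fun w w' e => by simpa using (Prod.ext_iff.1 e).2)
    · intro z hz1 hz2
      obtain ⟨v, hv, rfl⟩ := List.mem_map.1 hz1
      obtain ⟨w, hw, hwz⟩ := List.mem_map.1 hz2
      rw [Prod.mk.injEq] at hwz
      have hw' : f1 ∈ p.support.tail := hwz.2 ▸ hw
      have hnd := hp.support_nodup
      rw [p.support_eq_cons] at hnd
      exact (List.nodup_cons.1 hnd).1 hw'
  have hPQ : P = Q := walk_eq_of_isAcyclic hacy P Q hPpath hQpath
  -- (a, f2) is in the support of P but not of Q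
  have hmemP : ((a : V), f2) ∈ P.support.map Subtype.val := by
    rw [hPsup]
    exact List.mem_append_left _ (List.mem_map.2 ⟨f2, p.end_mem_support, rfl⟩)
  have hmemQ : ((a : V), f2) ∉ Q.support.map Subtype.val := by
    rw [hQsup]
    intro hmem
    rcases List.mem_append.1 hmem with h | h
    · obtain ⟨v, hv, hve⟩ := List.mem_map.1 h
      rw [Prod.mk.injEq] at hve
      exact hne hve.2
    · obtain ⟨w, hw, hwe⟩ := List.mem_map.1 h
      rw [Prod.mk.injEq] at hwe
      exact hab hwe.1.symm
  rw [hPQ] at hmemP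
  exact hmemQ hmemP


variable {W : Type*} [DecidableEq W] {T' : SimpleGraph W}

/-- The canonical path between two vertices of a connected graph. -/
noncomputable def pth (hc : T'.Connected) (x y : W) : T'.Walk x y :=
  ((hc.preconnected x y).some.toPath : T'.Path x y).val

lemma pth_isPath (hc : T'.Connected) (x y : W) : (pth hc x y).IsPath :=
  ((hc.preconnected x y).some.toPath : T'.Path x y).prop

lemma path_eq_pth (hc : T'.Connected) (ha : T'.IsAcyclic) {x y : W}
    (p : T'.Walk x y) (hp : p.IsPath) : p = pth hc x y :=
  walk_eq_of_isAcyclic ha p _ hp (pth_isPath hc x y)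

lemma mem_pth_reverse (hc : T'.Connected) (ha : T'.IsAcyclic) {x y c : W}
    (h : c ∈ (pth hc x y).support) : c ∈ (pth hc y x).support := by
  have : (pth hc x y).reverse = pth hc y x :=
    path_eq_pth hc ha _ ((pth_isPath hc x y).reverse)
  rw [← this, Walk.support_reverse, List.mem_reverse]
  exact h

/-- auxiliary asymmetric version -/
lemma no_two_between_aux (hc : T'.Connected) (ha : T'.IsAcyclic)
    {f1 f2 f3 c c' : W} (hcc' : c ≠ c')
    (h12c : c ∈ (pth hc f1 f2).support) (h12c' : c' ∈ (pth hc f1 f2).support)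
    (h13c' : c' ∈ (pth hc f1 f3).support)
    (h23c : c ∈ (pth hc f2 f3).support) (h23c' : c' ∈ (pth hc f2 f3).support)
    (hA : c ∈ ((pth hc f1 f2).takeUntil c' h12c').support) : False := by
  classical
  set P12 := pth hc f1 f2 with hP12
  set A := P12.takeUntil c' h12c' with hAdef
  set B := P12.dropUntil c' h12c' with hBdef
  have hP12path : P12.IsPath := pth_isPath hc f1 f2
  have hApath : A.IsPath := hP12path.takeUntil h12c'
  have hBpath : B.IsPath := hP12path.dropUntil h12c'
  -- P13 decomposition
  set P13 := pth hc f1 f3 with hP13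
  have hP13path : P13.IsPath := pth_isPath hc f1 f3
  set A' := P13.takeUntil c' h13c' with hA'def
  set B' := P13.dropUntil c' h13c' with hB'def
  have hA'path : A'.IsPath := hP13path.takeUntil h13c'
  have hB'path : B'.IsPath := hP13path.dropUntil h13c'
  have hAA' : A' = A := by
    rw [hAdef, hA'def]
    exact (path_eq_pth hc ha _ hA'path).trans (path_eq_pth hc ha _ hApath).symm
  -- P23 decomposition
  set P23 := pth hc f2 f3 with hP23
  have hP23path : P23.IsPath := pth_isPath hc f2 f3
  set s := P23.takeUntil c' h23c' with hsdef
  set d := P23.dropUntil c' h23c' with hddef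
  have hspath : s.IsPath := hP23path.takeUntil h23c'
  have hdpath : d.IsPath := hP23path.dropUntil h23c'
  have hsB : s = B.reverse := by
    exact (path_eq_pth hc ha _ hspath).trans (path_eq_pth hc ha _ hBpath.reverse).symm
  have hdB' : d = B' := by
    exact (path_eq_pth hc ha _ hdpath).trans (path_eq_pth hc ha _ hB'path).symm
  -- c is in s or d
  have hsplit : c ∈ s.support ∨ c ∈ d.support := by
    have := (Walk.take_spec P23 h23c')
    rw [← this] at h23c
    exact (Walk.mem_support_append_iff _ _).1 h23c
  have hnodup12 : (A.support ++ B.support.tail).Nodup := by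
    have := hP12path.support_nodup
    rw [← Walk.take_spec P12 h12c', Walk.support_append] at this
    rw [← hAdef, ← hBdef] at this
    exact this
  have hnodup13 : (A.support ++ B'.support.tail).Nodup := by
    have := hP13path.support_nodup
    rw [← Walk.take_spec P13 h13c', Walk.support_append] at this
    rw [← hA'def, ← hB'def, hAA'] at this
    exact this
  rcases hsplit with hcs | hcd
  · -- c ∈ B.support, and c ∈ A.support : contradiction in P12
    have hcB : c ∈ B.support := by
      rw [hsB, Walk.support_reverse, List.mem_reverse] at hcs
      exact hcs
    have hcBtail : c ∈ B.support.tail := by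
      have := B.support_eq_cons
      rw [this] at hcB
      rcases List.mem_cons.1 hcB with h | h
      · exact absurd h hcc'
      · exact h
    exact (List.disjoint_of_nodup_append hnodup12) hA hcBtail
  · -- c ∈ B'.support and c ∈ A.support : contradiction in P13
    have hcB' : c ∈ B'.support := by rw [hdB'] at hcd; exact hcd
    have hcB'tail : c ∈ B'.support.tail := by
      have := B'.support_eq_cons
      rw [this] at hcB'
      rcases List.mem_cons.1 hcB' with h | h
      · exact absurd h hcc'
      · exact h
    exact (List.disjoint_of_nodup_append hnodup13) hA hcB'tail

/-- In a tree, two distinct vertices cannot both lie on all three paths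
between three vertices. -/
lemma no_two_between (hc : T'.Connected) (ha : T'.IsAcyclic)
    {f1 f2 f3 c c' : W} (hcc' : c ≠ c')
    (h12c : c ∈ (pth hc f1 f2).support) (h12c' : c' ∈ (pth hc f1 f2).support)
    (h13c : c ∈ (pth hc f1 f3).support) (h13c' : c' ∈ (pth hc f1 f3).support)
    (h23c : c ∈ (pth hc f2 f3).support) (h23c' : c' ∈ (pth hc f2 f3).support) : False := by
  classical
  have hsplit : c ∈ ((pth hc f1 f2).takeUntil c' h12c').support
      ∨ c ∈ ((pth hc f1 f2).dropUntil c' h12c').support := by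
    have := (Walk.take_spec (pth hc f1 f2) h12c')
    rw [← this] at h12c
    exact (Walk.mem_support_append_iff _ _).1 h12c
  rcases hsplit with h | h
  · exact no_two_between_aux hc ha hcc' h12c h12c' h13c' h23c h23c' h
  · -- swap the roles of f1 and f2
    have h21c : c ∈ (pth hc f2 f1).support := mem_pth_reverse hc ha h12c
    have h21c' : c' ∈ (pth hc f2 f1).support := mem_pth_reverse hc ha h12c'
    -- c ∈ takeUntil of pth f2 f1 at c'
    have hkey : c ∈ ((pth hc f2 f1).takeUntil c' h21c').support := by
      -- takeUntil of the reverse path = reverse of dropUntil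
      have h1 : ((pth hc f2 f1).takeUntil c' h21c')
          = ((pth hc f1 f2).dropUntil c' h12c').reverse := by
        refine (path_eq_pth hc ha _ ((pth_isPath hc f2 f1).takeUntil h21c')).trans ?_
        exact (path_eq_pth hc ha _ ((pth_isPath hc f1 f2).dropUntil h12c').reverse).symm
      rw [h1, Walk.support_reverse, List.mem_reverse]
      exact h
    exact no_two_between_aux hc ha hcc' h21c h21c' h23c' h13c h13c' hkey

set_option linter.unusedSectionVars false


section Core
variable {V W : Type*} [Fintype V] [Fintype W] [DecidableEq V] [DecidableEq W]

/-- The set of deleted rows in column `w`. -/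
def Xcol (K : Finset (V × W)) (w : W) : Finset V :=
  Finset.univ.filter (fun v => (v, w) ∉ K)

lemma mem_Xcol {K : Finset (V × W)} {v : V} {w : W} :
    v ∈ Xcol K w ↔ (v, w) ∉ K := by simp [Xcol]

lemma sum_Xcol_card (K : Finset (V × W)) :
    ∑ w, (Xcol K w).card + K.card = Fintype.card V * Fintype.card W := by
  have h1 : ∑ w, (Xcol K w).card
      = (Finset.univ.filter (fun p : V × W => p ∉ K)).card := by
    rw [Finset.card_eq_sum_card_fiberwise
      (f := Prod.snd) (t := Finset.univ) (fun x _ => Finset.mem_univ _)]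
    refine Finset.sum_congr rfl (fun w _ => ?_)
    refine Finset.card_bij (fun v _ => (v, w)) ?_ ?_ ?_
    · intro a ha
      rw [mem_Xcol] at ha
      exact Finset.mem_filter.2 ⟨Finset.mem_filter.2 ⟨Finset.mem_univ _, ha⟩, rfl⟩
    · intro a ha b hb hab
      rw [Prod.mk.injEq] at hab
      exact hab.1
    · intro p hp
      simp only [Finset.mem_filter, Finset.mem_univ, true_and] at hp
      refine ⟨p.1, ?_, ?_⟩
      · rw [mem_Xcol, ← hp.2]
        exact hp.1
      · show (p.1, w) = p
        rw [← hp.2]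
  rw [h1]
  have h2 : (Finset.univ.filter (fun p : V × W => p ∉ K)).card
      + (Finset.univ.filter (fun p : V × W => p ∈ K)).card = Fintype.card (V × W) := by
    rw [add_comm]
    exact Finset.card_filter_add_card_filter_not (fun p => p ∈ K)
  rw [Finset.filter_univ_mem] at h2
  rw [← Fintype.card_prod]
  exact h2
end Core


section Core2
variable {V W : Type*} [Fintype V] [Fintype W] [DecidableEq V] [DecidableEq W]
  {T : SimpleGraph V} {T' : SimpleGraph W} {K : Finset (V × W)}

/-- The union of deleted rows over the columns of a walk. -/
def Bset (K : Finset (V × W)) {f1 f2 : W} (p : T'.Walk f1 f2) : Finset V :=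
  p.support.toFinset.biUnion (Xcol K)

lemma full_keeps {w : W} (hf : Xcol K w = ∅) (v : V) : (v, w) ∈ K := by
  by_contra h
  have : v ∈ Xcol K w := mem_Xcol.2 h
  rw [hf] at this
  exact absurd this (Finset.notMem_empty v)

lemma pair_count (hacy : ((T.boxProd T').induce (↑K : Set (V × W))).IsAcyclic)
    (hT : T.Connected) {f1 f2 : W}
    (hf1 : Xcol K f1 = ∅) (hf2 : Xcol K f2 = ∅) (hne : f1 ≠ f2)
    (p : T'.Walk f1 f2) (hp : p.IsPath) :
    Fintype.card V - 1 ≤ (Bset K p).card := by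
  by_contra hlt
  push_neg at hlt
  have hcompl : 2 ≤ ((Bset K p)ᶜ).card := by
    rw [Finset.card_compl]
    omega
  obtain ⟨a, ha, b, hb, hab⟩ := Finset.one_lt_card.1 (by omega : 1 < ((Bset K p)ᶜ).card)
  have hmem : ∀ c : V, c ∈ (Bset K p)ᶜ → ∀ w ∈ p.support, (c, w) ∈ (↑K : Set (V × W)) := by
    intro c hc w hw
    rw [Finset.mem_compl] at hc
    by_contra hck
    exact hc (Finset.mem_biUnion.2 ⟨w, List.mem_toFinset.2 hw, mem_Xcol.2 hck⟩)
  obtain ⟨q0⟩ := hT.preconnected a b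
  exact not_acyclic_ladder hne p hp hab q0.toPath.val q0.toPath.prop
    (hmem a ha) (hmem b hb)
    (fun v _ => full_keeps hf1 v) (fun v _ => full_keeps hf2 v) hacy

lemma sum_over_support_le {f1 f2 : W} (p : T'.Walk f1 f2) :
    ∑ w ∈ p.support.toFinset, (Xcol K w).card ≤ ∑ w, (Xcol K w).card :=
  Finset.sum_le_sum_of_subset (Finset.subset_univ _)

lemma card_Bset_le {f1 f2 : W} (p : T'.Walk f1 f2) :
    (Bset K p).card ≤ ∑ w ∈ p.support.toFinset, (Xcol K w).card :=
  Finset.card_biUnion_le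

/-- If the pair bound holds and the total deletion count is at most `n - 1`, then
every nonfull column lies on the path. -/
lemma nonfull_mem_support {n : ℕ} (hn : Fintype.card V = n)
    (hdel : ∑ w, (Xcol K w).card ≤ n - 1)
    {f1 f2 : W} {p : T'.Walk f1 f2} (hB : n - 1 ≤ (Bset K p).card)
    {w0 : W} (hw0 : (Xcol K w0).Nonempty) : w0 ∈ p.support := by
  by_contra hns
  have h1 : (Bset K p).card ≤ ∑ w ∈ p.support.toFinset, (Xcol K w).card := card_Bset_le p
  have h2 : ∑ w ∈ insert w0 p.support.toFinset, (Xcol K w).card ≤ ∑ w, (Xcol K w).card :=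
    Finset.sum_le_sum_of_subset (Finset.subset_univ _)
  rw [Finset.sum_insert (fun hmem => hns (List.mem_toFinset.1 hmem))] at h2
  have h3 : 1 ≤ (Xcol K w0).card := Finset.card_pos.2 hw0
  omega

/-- Two distinct columns on the path cannot have nested nonempty deleted sets. -/
lemma no_nested {n : ℕ} (hn : Fintype.card V = n)
    (hdel : ∑ w, (Xcol K w).card ≤ n - 1)
    {f1 f2 : W} {p : T'.Walk f1 f2} (hB : n - 1 ≤ (Bset K p).card)
    {u1 u2 : W} (hne : u1 ≠ u2) (h1 : u1 ∈ p.support) (h2 : u2 ∈ p.support)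
    (hsub : Xcol K u1 ⊆ Xcol K u2) (hne1 : (Xcol K u1).Nonempty) : False := by
  have hBsub : Bset K p ⊆ (p.support.toFinset.erase u1).biUnion (Xcol K) := by
    intro v hv
    obtain ⟨w, hw, hvw⟩ := Finset.mem_biUnion.1 hv
    by_cases hwu : w = u1
    · exact Finset.mem_biUnion.2 ⟨u2, Finset.mem_erase.2 ⟨hne.symm, List.mem_toFinset.2 h2⟩,
        hsub (hwu ▸ hvw)⟩
    · exact Finset.mem_biUnion.2 ⟨w, Finset.mem_erase.2 ⟨hwu, hw⟩, hvw⟩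
  have hc1 : (Bset K p).card ≤ ∑ w ∈ p.support.toFinset.erase u1, (Xcol K w).card :=
    le_trans (Finset.card_le_card hBsub) Finset.card_biUnion_le
  have hc2 : ∑ w ∈ insert u1 (p.support.toFinset.erase u1), (Xcol K w).card
      ≤ ∑ w, (Xcol K w).card := Finset.sum_le_sum_of_subset (Finset.subset_univ _)
  rw [Finset.sum_insert (Finset.notMem_erase _ _)] at hc2
  have h3 : 1 ≤ (Xcol K u1).card := Finset.card_pos.2 hne1
  omega

lemma no_full_adj (hacy : ((T.boxProd T').induce (↑K : Set (V × W))).IsAcyclic)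
    (hT : T.Connected) (hV : 2 ≤ Fintype.card V)
    {w1 w2 : W} (hadj : T'.Adj w1 w2)
    (hf1 : Xcol K w1 = ∅) (hf2 : Xcol K w2 = ∅) : False := by
  obtain ⟨a, b, hab⟩ := Fintype.exists_pair_of_one_lt_card (by omega : 1 < Fintype.card V)
  obtain ⟨q0⟩ := hT.preconnected a b
  refine not_acyclic_ladder hadj.ne (Walk.cons hadj Walk.nil) ?_ hab
    q0.toPath.val q0.toPath.prop ?_ ?_
    (fun v _ => full_keeps hf1 v) (fun v _ => full_keeps hf2 v) hacy
  · simp [Walk.isPath_def, hadj.ne]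
  · intro w hw
    simp only [Walk.support_cons, Walk.support_nil, List.mem_cons, List.mem_singleton] at hw
    rcases hw with rfl | rfl | h
    · exact full_keeps hf1 a
    · exact full_keeps hf2 a
    · cases h
  · intro w hw
    simp only [Walk.support_cons, Walk.support_nil, List.mem_cons, List.mem_singleton] at hw
    rcases hw with rfl | rfl | h
    · exact full_keeps hf1 b
    · exact full_keeps hf2 b
    · cases h

lemma cover_of_adj_full (hacy : ((T.boxProd T').induce (↑K : Set (V × W))).IsAcyclic)
    {f u : W} (hadj : T'.Adj f u) (hf : Xcol K f = ∅)
    {a b : V} (hab : T.Adj a b) (ha : (a, u) ∈ K) (hb : (b, u) ∈ K) : False := by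
  refine not_acyclic_ladder hadj.ne (Walk.cons hadj Walk.nil) ?_ hab.ne
    (Walk.cons hab Walk.nil) ?_ ?_ ?_ ?_ ?_ hacy
  · simp [Walk.isPath_def, hadj.ne]
  · simp [Walk.isPath_def, hab.ne]
  · intro w hw
    simp only [Walk.support_cons, Walk.support_nil, List.mem_cons, List.mem_singleton] at hw
    rcases hw with rfl | rfl | h
    · exact full_keeps hf a
    · exact ha
    · cases h
  · intro w hw
    simp only [Walk.support_cons, Walk.support_nil, List.mem_cons, List.mem_singleton] at hw
    rcases hw with rfl | rfl | h
    · exact full_keeps hf b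
    · exact hb
    · cases h
  · intro v hv
    exact full_keeps hf v
  · intro v hv
    simp only [Walk.support_cons, Walk.support_nil, List.mem_cons, List.mem_singleton] at hv
    rcases hv with rfl | rfl | h
    · exact ha
    · exact hb
    · cases h

lemma exists_adj_of_ne {X : Type*} {G : SimpleGraph X} (hc : G.Connected) {x y : X} (h : x ≠ y) :
    ∃ z, G.Adj x z := by
  classical
  obtain ⟨w⟩ := hc.preconnected x y
  cases w with
  | nil => exact absurd rfl h
  | cons h' q => exact ⟨_, h'⟩

lemma sum_eq_one_of_each {X : Type*} [DecidableEq X] {s : Finset X} {f : X → ℕ}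
    (h1 : ∀ i ∈ s, 1 ≤ f i) (h2 : ∑ i ∈ s, f i = s.card) : ∀ i ∈ s, f i = 1 := by
  by_contra hcon
  push_neg at hcon
  obtain ⟨i, hi, hfi⟩ := hcon
  have : ∑ i ∈ s, (1 : ℕ) < ∑ i ∈ s, f i :=
    Finset.sum_lt_sum h1 ⟨i, hi, by have := h1 i hi; omega⟩
  rw [Finset.sum_const, smul_eq_mul, mul_one, h2] at this
  exact lt_irrefl _ this

end Core2


section CoreMain
variable {V W : Type*} [Fintype V] [Fintype W] [DecidableEq V] [DecidableEq W]
  {T : SimpleGraph V} {T' : SimpleGraph W} {K : Finset (V × W)}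

theorem core (hT : T.IsTree) (hT' : T'.IsTree) {n n' : ℕ}
    (hn : Fintype.card V = n) (hn' : Fintype.card W = n')
    (h2 : 2 ≤ n) (hnn' : n < n')
    (hacy : ((T.boxProd T').induce (↑K : Set (V × W))).IsAcyclic)
    (hdel : ∑ w, (Xcol K w).card ≤ n - 1) :
    (n - 1 ≤ ∑ w, (Xcol K w).card) ∧ ∃ m : W, ∀ x y, T'.Adj x y → x = m ∨ y = m := by
  have hc' : T'.Connected := hT'.isConnected
  have ha' : T'.IsAcyclic := hT'.IsAcyclic
  have hTc : T.Connected := hT.isConnected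
  have hV2 : 2 ≤ Fintype.card V := hn ▸ h2
  set FC : Finset W := Finset.univ.filter (fun w => Xcol K w = ∅) with hFCdef
  set NF : Finset W := Finset.univ.filter (fun w => ¬ (Xcol K w = ∅)) with hNFdef
  have hmemFC : ∀ {w : W}, w ∈ FC ↔ Xcol K w = ∅ := fun {w} => by simp [hFCdef]
  have hmemNF : ∀ {w : W}, w ∈ NF ↔ ¬ (Xcol K w = ∅) := fun {w} => by simp [hNFdef]
  have hsplitcard : FC.card + NF.card = n' := by
    rw [hFCdef, hNFdef, Finset.card_filter_add_card_filter_not,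
      Finset.card_univ, hn']
  have hNFle : NF.card ≤ ∑ w, (Xcol K w).card := by
    calc NF.card = ∑ _w ∈ NF, 1 := by rw [Finset.sum_const, smul_eq_mul, mul_one]
    _ ≤ ∑ w ∈ NF, (Xcol K w).card := Finset.sum_le_sum (fun w hw =>
        Finset.card_pos.2 (Finset.nonempty_iff_ne_empty.2 (hmemNF.1 hw)))
    _ ≤ ∑ w, (Xcol K w).card := Finset.sum_le_sum_of_subset (Finset.subset_univ _)
  have hFC2 : 2 ≤ FC.card := by omega
  obtain ⟨f1, hf1mem, f2, hf2mem, hf12⟩ := Finset.one_lt_card.1 (by omega : 1 < FC.card)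
  have hf1 : Xcol K f1 = ∅ := hmemFC.1 hf1mem
  have hf2 : Xcol K f2 = ∅ := hmemFC.1 hf2mem
  have hB12 : n - 1 ≤ (Bset K (pth hc' f1 f2)).card := by
    have := pair_count hacy hTc hf1 hf2 hf12 (pth hc' f1 f2) (pth_isPath hc' f1 f2)
    rwa [hn] at this
  have hchain : n - 1 ≤ ∑ w, (Xcol K w).card :=
    le_trans hB12 (le_trans (card_Bset_le _) (sum_over_support_le _))
  refine ⟨hchain, ?_⟩
  have hex : ∃ w0, (Xcol K w0).Nonempty := by
    by_contra hno
    push_neg at hno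
    have hz : ∑ w, (Xcol K w).card = 0 := Finset.sum_eq_zero (fun w _ => by
      rw [Finset.card_eq_zero, ← Finset.not_nonempty_iff_eq_empty]
      exact fun hne => hne.ne_empty (hno w))
    omega
  obtain ⟨w0, hw0⟩ := hex
  by_cases hFC3 : 3 ≤ FC.card
  · -- at least three full columns: all deletions in a single column w0
    obtain ⟨g1, g2, g3, hg1, hg2, hg3, h12, h13, h23⟩ :=
      Finset.two_lt_card_iff.1 (by omega : 2 < FC.card)
    have hBg : ∀ {x y : W}, x ∈ FC → y ∈ FC → x ≠ y →
        n - 1 ≤ (Bset K (pth hc' x y)).card := by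
      intro x y hx hy hxy
      have := pair_count hacy hTc (hmemFC.1 hx) (hmemFC.1 hy) hxy
        (pth hc' x y) (pth_isPath hc' x y)
      rwa [hn] at this
    have hmemsup : ∀ {x y : W}, x ∈ FC → y ∈ FC → x ≠ y → ∀ {u : W},
        (Xcol K u).Nonempty → u ∈ (pth hc' x y).support := by
      intro x y hx hy hxy u hu
      exact nonfull_mem_support hn hdel (hBg hx hy hxy) hu
    have hallfull : ∀ u, u ≠ w0 → Xcol K u = ∅ := by
      intro u hu
      by_contra hne
      have hune : (Xcol K u).Nonempty := Finset.nonempty_iff_ne_empty.2 hne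
      exact no_two_between hc' ha' (Ne.symm hu)
        (hmemsup hg1 hg2 h12 hw0) (hmemsup hg1 hg2 h12 hune)
        (hmemsup hg1 hg3 h13 hw0) (hmemsup hg1 hg3 h13 hune)
        (hmemsup hg2 hg3 h23 hw0) (hmemsup hg2 hg3 h23 hune)
    refine ⟨w0, ?_⟩
    intro x y hxy
    by_contra hcon
    push_neg at hcon
    exact no_full_adj hacy hTc hV2 hxy (hallfull x hcon.1) (hallfull y hcon.2)
  · -- exactly two full columns
    have hFCmem2 : ∀ w ∈ FC, w = f1 ∨ w = f2 := by
      intro w hw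
      by_contra hcon
      push_neg at hcon
      have hsub : ({w, f1, f2} : Finset W) ⊆ FC := by
        intro u hu
        simp only [Finset.mem_insert, Finset.mem_singleton] at hu
        rcases hu with rfl | rfl | rfl
        · exact hw
        · exact hf1mem
        · exact hf2mem
      have hcard3 : ({w, f1, f2} : Finset W).card = 3 := by
        rw [Finset.card_insert_of_notMem (by simp [hcon.1, hcon.2]),
          Finset.card_insert_of_notMem (by simp [hf12]), Finset.card_singleton]
      have := Finset.card_le_card hsub
      omega
    have hsum_eq : ∑ w, (Xcol K w).card = n - 1 := le_antisymm hdel hchain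
    have hn'eq : n' = n + 1 := by omega
    have hNFcard : NF.card = n - 1 := by omega
    have hsumNF : ∑ w ∈ NF, (Xcol K w).card = NF.card := by
      have hss : ∑ w ∈ NF, (Xcol K w).card = ∑ w, (Xcol K w).card := by
        apply Finset.sum_subset (Finset.subset_univ _)
        intro w _ hwnf
        rw [Finset.card_eq_zero]
        by_contra hne
        exact hwnf (hmemNF.2 hne)
      omega
    have hsingle : ∀ w ∈ NF, (Xcol K w).card = 1 :=
      sum_eq_one_of_each (fun w hw =>
        Finset.card_pos.2 (Finset.nonempty_iff_ne_empty.2 (hmemNF.1 hw))) hsumNF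
    have hB : n - 1 ≤ (Bset K (pth hc' f1 f2)).card := hB12
    have hsuppNF : ∀ {u : W}, (Xcol K u).Nonempty → u ∈ (pth hc' f1 f2).support :=
      fun hu => nonfull_mem_support hn hdel hB hu
    obtain ⟨u1, hu1adj⟩ := exists_adj_of_ne hc' hf12
    have hu1nef1 : u1 ≠ f1 := hu1adj.ne'
    have hu1nef2 : u1 ≠ f2 := by
      rintro rfl
      exact no_full_adj hacy hTc hV2 hu1adj hf1 hf2
    have hu1NF : u1 ∈ NF := by
      rw [hmemNF]
      intro hfull
      rcases hFCmem2 u1 (hmemFC.2 hfull) with rfl | rfl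
      · exact hu1nef1 rfl
      · exact hu1nef2 rfl
    by_cases hncase : n' ≤ 3
    · -- n = 2, n' = 3 : star with centre u1
      have hNF1 : NF.card = 1 := by omega
      have hNFeq : NF = {u1} := by
        rw [Finset.card_eq_one] at hNF1
        obtain ⟨z, hz⟩ := hNF1
        rw [hz] at hu1NF ⊢
        rw [Finset.mem_singleton] at hu1NF
        rw [hu1NF]
      refine ⟨u1, ?_⟩
      intro x y hxy
      by_contra hcon
      push_neg at hcon
      have hxf : Xcol K x = ∅ := by
        by_contra h
        have : x ∈ NF := hmemNF.2 h
        rw [hNFeq, Finset.mem_singleton] at this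
        exact hcon.1 this
      have hyf : Xcol K y = ∅ := by
        by_contra h
        have : y ∈ NF := hmemNF.2 h
        rw [hNFeq, Finset.mem_singleton] at this
        exact hcon.2 this
      exact no_full_adj hacy hTc hV2 hxy hxf hyf
    · -- n' ≥ 4 : contradiction
      exfalso
      push_neg at hncase
      obtain ⟨u2, hu2adj⟩ := exists_adj_of_ne hc' (Ne.symm hf12)
      have hu2nef2 : u2 ≠ f2 := hu2adj.ne'
      have hu2nef1 : u2 ≠ f1 := by
        rintro rfl
        exact no_full_adj hacy hTc hV2 hu2adj.symm hf1 hf2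
      have hu2NF : u2 ∈ NF := by
        rw [hmemNF]
        intro hfull
        rcases hFCmem2 u2 (hmemFC.2 hfull) with rfl | rfl
        · exact hu2nef1 rfl
        · exact hu2nef2 rfl
      have hu12 : u1 ≠ u2 := by
        rintro rfl
        have hpath2 : (Walk.cons hu1adj (Walk.cons hu2adj.symm Walk.nil) :
            T'.Walk f1 f2).IsPath := by
          rw [Walk.isPath_def]
          simp [hu1nef1.symm, hf12, hu1nef2]
        have hpeq : (Walk.cons hu1adj (Walk.cons hu2adj.symm Walk.nil) : T'.Walk f1 f2)
            = pth hc' f1 f2 := path_eq_pth hc' ha' _ hpath2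
        have hsupp_univ : ∀ w : W, w ∈ (pth hc' f1 f2).support := by
          intro w
          by_cases hwf : Xcol K w = ∅
          · rcases hFCmem2 w (hmemFC.2 hwf) with rfl | rfl
            · exact Walk.start_mem_support _
            · exact Walk.end_mem_support _
          · exact hsuppNF (Finset.nonempty_iff_ne_empty.2 hwf)
        have hcard3 : Fintype.card W ≤ 3 := by
          have hsub : (Finset.univ : Finset W) ⊆ {f1, u1, f2} := by
            intro w _
            have hw := hsupp_univ w
            rw [← hpeq] at hw
            simp only [Walk.support_cons, Walk.support_nil, List.mem_cons,
              List.mem_singleton] at hw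
            simp only [Finset.mem_insert, Finset.mem_singleton]
            rcases hw with rfl | rfl | rfl | h
            · exact Or.inl rfl
            · exact Or.inr (Or.inl rfl)
            · exact Or.inr (Or.inr rfl)
            · cases h
          calc Fintype.card W = (Finset.univ : Finset W).card := (Finset.card_univ).symm
          _ ≤ ({f1, u1, f2} : Finset W).card := Finset.card_le_card hsub
          _ ≤ 3 := by
              apply le_trans (Finset.card_insert_le _ _)
              have := Finset.card_insert_le u1 ({f2} : Finset W)
              simp only [Finset.card_singleton] at this
              omega
        omega
      obtain ⟨x, hXu1⟩ := Finset.card_eq_one.1 (hsingle u1 hu1NF)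
      obtain ⟨y, hXu2⟩ := Finset.card_eq_one.1 (hsingle u2 hu2NF)
      have hu1ne : (Xcol K u1).Nonempty := by rw [hXu1]; exact Finset.singleton_nonempty x
      have hu2ne : (Xcol K u2).Nonempty := by rw [hXu2]; exact Finset.singleton_nonempty y
      have hxy : x ≠ y := by
        rintro rfl
        exact no_nested hn hdel hB hu12 (hsuppNF hu1ne) (hsuppNF hu2ne)
          (by rw [hXu1, hXu2]) hu1ne
      have hcov1 : ∀ a b : V, T.Adj a b → a = x ∨ b = x := by
        intro a b hab
        by_contra hcon
        push_neg at hcon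
        have hak : (a, u1) ∈ K := by
          by_contra h
          have : a ∈ Xcol K u1 := mem_Xcol.2 h
          rw [hXu1, Finset.mem_singleton] at this
          exact hcon.1 this
        have hbk : (b, u1) ∈ K := by
          by_contra h
          have : b ∈ Xcol K u1 := mem_Xcol.2 h
          rw [hXu1, Finset.mem_singleton] at this
          exact hcon.2 this
        exact cover_of_adj_full hacy hu1adj hf1 hab hak hbk
      have hcov2 : ∀ a b : V, T.Adj a b → a = y ∨ b = y := by
        intro a b hab
        by_contra hcon
        push_neg at hcon
        have hak : (a, u2) ∈ K := by
          by_contra h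
          have : a ∈ Xcol K u2 := mem_Xcol.2 h
          rw [hXu2, Finset.mem_singleton] at this
          exact hcon.1 this
        have hbk : (b, u2) ∈ K := by
          by_contra h
          have : b ∈ Xcol K u2 := mem_Xcol.2 h
          rw [hXu2, Finset.mem_singleton] at this
          exact hcon.2 this
        exact cover_of_adj_full hacy hu2adj hf2 hab hak hbk
      have hzex : ∃ z : V, z ≠ x ∧ z ≠ y := by
        have hle : (({x, y} : Finset V)).card ≤ 2 := by
          apply le_trans (Finset.card_insert_le _ _)
          simp
        have hcardc : 1 ≤ (({x, y} : Finset V)ᶜ).card := by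
          rw [Finset.card_compl]
          omega
        obtain ⟨z, hz⟩ := Finset.card_pos.1 (by omega : 0 < (({x, y} : Finset V)ᶜ).card)
        rw [Finset.mem_compl, Finset.mem_insert, Finset.mem_singleton] at hz
        push_neg at hz
        exact ⟨z, hz⟩
      obtain ⟨z, hzx, hzy⟩ := hzex
      obtain ⟨zn, hzadj⟩ := exists_adj_of_ne hTc hzx
      rcases hcov1 z zn hzadj with h | h
      · exact hzx h
      · rcases hcov2 z zn hzadj with h' | h'
        · exact hzy h'
        · exact hxy (h ▸ h')
end CoreMain



section Construction
variable {V W : Type*} [DecidableEq V] [DecidableEq W] [Fintype V] [Fintype W]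
  {T : SimpleGraph V} {T' : SimpleGraph W}

/-- The kept set for the star construction: everything except the non-`v0` vertices of
the centre column `m`. -/
def Kstar (v0 : V) (m : W) : Finset (V × W) :=
  Finset.univ.filter (fun p => p.2 = m → p.1 = v0)

lemma mem_Kstar {v0 : V} {m : W} {p : V × W} :
    p ∈ Kstar v0 m ↔ (p.2 = m → p.1 = v0) := by simp [Kstar]

lemma Kstar_card (v0 : V) (m : W) :
    (Kstar v0 m).card + (Fintype.card V - 1) = Fintype.card V * Fintype.card W := by
  classical
  have h1 : (Kstar v0 m).card
      + (Finset.univ.filter (fun p : V × W => ¬ (p.2 = m → p.1 = v0))).card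
      = Fintype.card V * Fintype.card W := by
    rw [Kstar, Finset.card_filter_add_card_filter_not, Finset.card_univ,
      Fintype.card_prod]
  have h2 : (Finset.univ.filter (fun p : V × W => ¬ (p.2 = m → p.1 = v0))).card
      = Fintype.card V - 1 := by
    have hbij : (Finset.univ.filter (fun p : V × W => ¬ (p.2 = m → p.1 = v0))).card
        = (Finset.univ.erase v0).card := by
      refine Finset.card_bij (fun p _ => p.1) ?_ ?_ ?_
      · intro p hp
        simp only [Finset.mem_filter, Finset.mem_univ, true_and, Classical.not_imp] at hp
        exact Finset.mem_erase.2 ⟨hp.2, Finset.mem_univ _⟩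
      · intro p hp q hq hpq
        simp only [Finset.mem_filter, Finset.mem_univ, true_and, Classical.not_imp] at hp hq
        exact Prod.ext hpq (hp.1.trans hq.1.symm)
      · intro v hv
        refine ⟨(v, m), ?_, rfl⟩
        simp only [Finset.mem_filter, Finset.mem_univ, true_and, Classical.not_imp]
        exact (Finset.mem_erase.1 hv).1
    rw [hbij, Finset.card_erase_of_mem (Finset.mem_univ _), Finset.card_univ]
  omega

lemma kstar_acyclic (hT : T.IsAcyclic) {v0 : V} {m : W}
    (hcenter : ∀ x y : W, T'.Adj x y → x = m ∨ y = m) :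
    ((T.boxProd T').induce (↑(Kstar v0 m) : Set (V × W))).IsAcyclic := by
  classical
  set G0 := (T.boxProd T').induce (↑(Kstar v0 m) : Set (V × W)) with hG0
  have hzmem : ((v0, m) : V × W) ∈ (↑(Kstar v0 m) : Set (V × W)) := by
    rw [Finset.mem_coe, mem_Kstar]
    exact fun _ => rfl
  set z : ↥(↑(Kstar v0 m) : Set (V × W)) := ⟨(v0, m), hzmem⟩ with hzdef
  -- a step of a walk avoiding z stays in a column and projects to an edge of T
  have hstep : ∀ (x y : ↥(↑(Kstar v0 m) : Set (V × W))), G0.Adj x y → x ≠ z → y ≠ z →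
      x.val.2 = y.val.2 ∧ T.Adj x.val.1 y.val.1 := by
    intro x y h hx hy
    rcases h with ⟨hadj, hcol⟩ | ⟨hadj', hrow⟩
    · exact ⟨hcol, hadj⟩
    · exfalso
      rcases hcenter _ _ hadj' with hm | hm
      · apply hx
        apply Subtype.ext
        have hv : x.val.1 = v0 := mem_Kstar.1 (Finset.mem_coe.1 x.prop) hm
        exact Prod.ext hv hm
      · apply hy
        apply Subtype.ext
        have hv : y.val.1 = v0 := mem_Kstar.1 (Finset.mem_coe.1 y.prop) hm
        exact Prod.ext hv hm
  -- walks avoiding z are column-constant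
  have hconst : ∀ {x y : ↥(↑(Kstar v0 m) : Set (V × W))} (p : G0.Walk x y),
      z ∉ p.support → ∀ u ∈ p.support, u.val.2 = x.val.2 := by
    intro x y p
    induction p with
    | nil =>
      intro _ u hu
      rw [Walk.support_nil, List.mem_singleton] at hu
      rw [hu]
    | @cons a b c h q ih =>
      intro hz u hu
      rw [Walk.support_cons, List.mem_cons] at hu hz
      push_neg at hz
      rcases hu with rfl | hu
      · rfl
      · have hcols := (hstep a b h (Ne.symm hz.1) (fun hbz =>
          hz.2 (hbz ▸ q.start_mem_support))).1
        rw [ih hz.2 u hu, ← hcols]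
  -- now the main acyclicity argument
  intro x c hc
  by_cases hzc : z ∈ c.support
  · -- the cycle passes through the centre
    have hc' := hc.rotate hzc
    set c' := c.rotate z hzc with hc'def
    obtain ⟨u, hadj, q, hq⟩ := (Walk.not_nil_iff).1 hc'.not_nil
    have hcyc : q.IsPath ∧ s(z, u) ∉ q.edges := by
      have := hc'
      rw [hq] at this
      exact (Walk.cons_isCycle_iff q hadj).1 this
    have hzu : z ≠ u := hadj.ne
    obtain ⟨u', hadj2, s, hs⟩ := Walk.exists_eq_cons_of_ne hzu q.reverse
    -- all neighbours of z have first coordinate v0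
    have hnbr : ∀ (t : ↥(↑(Kstar v0 m) : Set (V × W))), G0.Adj z t → t.val.1 = v0 := by
      intro t ht
      rcases ht with ⟨hadjT, hcol⟩ | ⟨hadj', hrow⟩
      · exfalso
        have hveq : t.val.1 = v0 := mem_Kstar.1 (Finset.mem_coe.1 t.prop) hcol.symm
        exact hadjT.ne hveq.symm
      · exact hrow.symm
    have hu1 : u.val.1 = v0 := hnbr u hadj
    have hu'1 : u'.val.1 = v0 := hnbr u' hadj2
    -- s avoids z
    have hzs : z ∉ s.support := by
      have hrev : q.reverse.IsPath := hcyc.1.reverse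
      rw [hs] at hrev
      have := hrev.support_nodup
      rw [Walk.support_cons] at this
      exact (List.nodup_cons.1 this).1
    -- s is column-constant, so u and u' are in the same column
    have hcol : u.val.2 = u'.val.2 := by
      have := hconst s hzs u s.end_mem_support
      exact this
    have huu' : u = u' := by
      apply Subtype.ext
      apply Prod.ext
      · rw [hu1, hu'1]
      · exact hcol
    -- but then the edge s(z,u) appears in q
    subst huu'
    apply hcyc.2
    have hmem : s(z, u) ∈ q.reverse.edges := by
      rw [hs, Walk.edges_cons]
      exact List.mem_cons_self
    rw [Walk.edges_reverse, List.mem_reverse] at hmem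
    exact hmem
  · -- the cycle avoids the centre: project to T
    obtain ⟨u, hadj, q, hq⟩ := (Walk.not_nil_iff).1 hc.not_nil
    have hcyc : q.IsPath ∧ s(x, u) ∉ q.edges := by
      have := hc
      rw [hq] at this
      exact (Walk.cons_isCycle_iff q hadj).1 this
    have hzq : z ∉ q.support := by
      intro hmem
      apply hzc
      rw [hq, Walk.support_cons]
      exact List.mem_cons_of_mem _ hmem
    have hxz : x ≠ z := by
      intro h
      subst h
      exact hzc c.start_mem_support
    have huz : u ≠ z := by
      intro h
      apply hzc
      rw [hq, Walk.support_cons]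
      exact List.mem_cons_of_mem _ (h ▸ q.start_mem_support)
    have hTadj : T.Adj x.val.1 u.val.1 := (hstep x u hadj hxz huz).2
    -- build the projected walk
    have hproj : ∀ {a b : ↥(↑(Kstar v0 m) : Set (V × W))} (p : G0.Walk a b)
        (hpz : z ∉ p.support), ∃ (t : T.Walk a.val.1 b.val.1),
        t.support = p.support.map (fun u => u.val.1) := by
      intro a b p
      induction p with
      | nil =>
        intro _
        exact ⟨Walk.nil, by simp⟩
      | @cons a' b' c'' h p' ih =>
        intro hpz
        rw [Walk.support_cons, List.mem_cons] at hpz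
        push_neg at hpz
        have hb'z : b' ≠ z := fun hb => hpz.2 (hb ▸ p'.start_mem_support)
        obtain ⟨t, ht⟩ := ih hpz.2
        refine ⟨Walk.cons (hstep a' b' h (Ne.symm hpz.1) hb'z).2 t, ?_⟩
        rw [Walk.support_cons, ht, Walk.support_cons, List.map_cons]
    obtain ⟨t, ht⟩ := hproj q hzq
    -- t is a path
    have htpath : t.IsPath := by
      rw [Walk.isPath_def]
      rw [ht]
      refine List.Nodup.map_on ?_ hcyc.1.support_nodup
      intro e he f hf hef
      apply Subtype.ext
      apply Prod.ext hef
      rw [hconst q hzq e he, hconst q hzq f hf]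
    -- two distinct paths from x₁ to u₁ in T
    have hone : (Walk.cons hTadj Walk.nil : T.Walk x.val.1 u.val.1).IsPath := by
      rw [Walk.isPath_def]
      simp [hTadj.ne]
    have heq := walk_eq_of_isAcyclic hT (Walk.cons hTadj Walk.nil) t.reverse hone
      htpath.reverse
    have hlen : (Walk.cons hTadj Walk.nil : T.Walk x.val.1 u.val.1).length
        = t.reverse.length := by rw [heq]
    have hlt : t.length = q.length := by
      have h1 := Walk.length_support t
      have h2 := Walk.length_support q
      rw [ht, List.length_map] at h1
      omega
    have h3 := hc.three_le_length
    rw [hq] at h3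
    rw [Walk.length_cons] at h3
    rw [Walk.length_reverse] at hlen
    simp only [Walk.length_cons, Walk.length_nil] at hlen
    omega

end Construction


section StarIso
variable {W : Type*} [Fintype W] [DecidableEq W] {T' : SimpleGraph W}

lemma star_char_of_center (hc : T'.Connected) {m : W}
    (hstar : ∀ x y : W, T'.Adj x y → x = m ∨ y = m) :
    ∀ x y : W, T'.Adj x y ↔ (x ≠ y ∧ (x = m ∨ y = m)) := by
  have hadjm : ∀ w, w ≠ m → T'.Adj w m := by
    intro w hw
    obtain ⟨p⟩ := hc.preconnected w m
    cases p with
    | nil => exact absurd rfl hw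
    | cons h q =>
      rcases hstar _ _ h with h1 | h2
      · exact absurd h1 hw
      · exact h2 ▸ h
  intro x y
  constructor
  · intro h
    exact ⟨h.ne, hstar _ _ h⟩
  · rintro ⟨hne, rfl | rfl⟩
    · exact (hadjm y (Ne.symm hne)).symm
    · exact hadjm x hne

lemma iso_star_of_center {n' : ℕ} (hn' : Fintype.card W = n') (h3 : 1 ≤ n')
    {m : W} (hchar : ∀ x y : W, T'.Adj x y ↔ (x ≠ y ∧ (x = m ∨ y = m))) :
    Nonempty (T' ≃g _root_.starGraph n') := by
  have hpos : 0 < n' := h3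
  let e0 : W ≃ Fin n' := Fintype.equivFinOfCardEq hn'
  let zero : Fin n' := ⟨0, hpos⟩
  let e : W ≃ Fin n' := e0.trans (Equiv.swap (e0 m) zero)
  have hem : e m = zero := by
    show Equiv.swap (e0 m) zero (e0 m) = zero
    exact Equiv.swap_apply_left _ _
  have hval : ∀ a : W, ((e a).val = 0 ↔ a = m) := by
    intro a
    constructor
    · intro h
      have h1 : e a = zero := Fin.ext h
      exact e.injective (h1.trans hem.symm)
    · rintro rfl
      rw [hem]
  refine ⟨⟨e, ?_⟩⟩
  intro a b
  show ((e a ≠ e b) ∧ ((e a).val = 0 ∨ (e b).val = 0)) ↔ T'.Adj a b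
  rw [hchar a b]
  constructor
  · rintro ⟨hne, h0⟩
    refine ⟨fun h => hne (by rw [h]), ?_⟩
    rcases h0 with h0 | h0
    · exact Or.inl ((hval a).1 h0)
    · exact Or.inr ((hval b).1 h0)
  · rintro ⟨hne, h0⟩
    refine ⟨fun h => hne (e.injective h), ?_⟩
    rcases h0 with rfl | rfl
    · exact Or.inl ((hval a).2 rfl)
    · exact Or.inr ((hval b).2 rfl)

lemma center_of_iso {n' : ℕ} (hn' : Fintype.card W = n') (h1 : 1 ≤ n')
    (e : T' ≃g _root_.starGraph n') :
    ∃ m : W, ∀ x y : W, T'.Adj x y → x = m ∨ y = m := by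
  let zero : Fin n' := ⟨0, h1⟩
  refine ⟨e.symm zero, ?_⟩
  intro x y hxy
  have hadj : (_root_.starGraph n').Adj (e x) (e y) := e.map_rel_iff.2 hxy
  rcases hadj.2 with h0 | h0
  · left
    have : e x = zero := Fin.ext h0
    rw [← this, RelIso.symm_apply_apply]
  · right
    have : e y = zero := Fin.ext h0
    rw [← this, RelIso.symm_apply_apply]

end StarIso

end ForestStar

theorem forest_boxProd_distinct_orders_eq_iff_star
    {V W : Type*} [Fintype V] [Fintype W]
    (T : SimpleGraph V) (T' : SimpleGraph W) (n n' : ℕ)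
    (hn : Fintype.card V = n) (hn' : Fintype.card W = n')
    (h2 : 2 ≤ n) (hnn' : n < n')
    (hT : T.IsTree) (hT' : T'.IsTree) :
    forestNumber (T.boxProd T') = n * n' - n + 1 ↔
      Nonempty (T' ≃g _root_.starGraph n') := by
  classical
  have hA : n ≤ n * n' := Nat.le_mul_of_pos_right n (by omega)
  set 𝒮 : Set ℕ := {k | ∃ S : Finset (V × W), S.card = k ∧
      ((T.boxProd T').induce (↑S : Set (V × W))).IsAcyclic} with h𝒮
  have hfn : forestNumber (T.boxProd T') = sSup 𝒮 := rfl
  have hbdd : BddAbove 𝒮 := by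
    refine ⟨n * n', ?_⟩
    rintro k ⟨S, rfl, -⟩
    exact le_trans (Finset.card_le_univ S)
      (by rw [Fintype.card_prod, hn, hn'])
  have hne : 𝒮.Nonempty := by
    refine ⟨0, ∅, Finset.card_empty, ?_⟩
    intro v
    exact absurd v.prop (by simp)
  have hub : ∀ k ∈ 𝒮, k ≤ n * n' - n + 1 := by
    rintro k ⟨K, rfl, hacy⟩
    by_contra hgt
    push_neg at hgt
    have hsum := ForestStar.sum_Xcol_card K
    rw [hn, hn'] at hsum
    have hdel : ∑ w, (ForestStar.Xcol K w).card ≤ n - 1 := by omega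
    have := (ForestStar.core hT hT' hn hn' h2 hnn' hacy hdel).1
    omega
  constructor
  · intro h
    rw [hfn] at h
    have hmem : sSup 𝒮 ∈ 𝒮 := Nat.sSup_mem hne hbdd
    rw [h] at hmem
    obtain ⟨K, hKcard, hacy⟩ := hmem
    have hsum := ForestStar.sum_Xcol_card K
    rw [hn, hn'] at hsum
    have hdel : ∑ w, (ForestStar.Xcol K w).card ≤ n - 1 := by omega
    obtain ⟨-, m, hstar⟩ := ForestStar.core hT hT' hn hn' h2 hnn' hacy hdel
    exact ForestStar.iso_star_of_center hn' (by omega)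
      (ForestStar.star_char_of_center hT'.isConnected hstar)
  · rintro ⟨e⟩
    obtain ⟨m, hcenter⟩ := ForestStar.center_of_iso hn' (by omega) e
    obtain ⟨v0⟩ : Nonempty V := Fintype.card_pos_iff.1 (by omega)
    have hacy := ForestStar.kstar_acyclic (T := T) (T' := T') (v0 := v0) (m := m)
      hT.IsAcyclic hcenter
    have hcard := ForestStar.Kstar_card (V := V) (W := W) v0 m
    rw [hn, hn'] at hcard
    have hmem : n * n' - n + 1 ∈ 𝒮 := ⟨ForestStar.Kstar v0 m, by omega, hacy⟩
    have hle : n * n' - n + 1 ≤ sSup 𝒮 := le_csSup hbdd hmem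
    have hge : sSup 𝒮 ≤ n * n' - n + 1 := csSup_le hne hub
    rw [hfn]
    omega
end

section
/- If 2 ≤ n' < n and T is a tree of order n that is not isomorphic to the star S_n, then the decycling number satisfies n' ≤ ∇(T □ S_{n'}) ≤ n − 1. -/
open SimpleGraph

section Aux
open Finset

lemma no_cross_not_reachable {W : Type*} {H : SimpleGraph W} {C : Set W}
    (hC : ∀ ⦃a b⦄, H.Adj a b → (a ∈ C ↔ b ∈ C)) {x y : W} (hx : x ∈ C) (hy : y ∉ C) :
    ¬ H.Reachable x y := by
  rintro ⟨p⟩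
  obtain ⟨d, -, h1, h2⟩ := p.exists_boundary_dart C hx hy
  exact h2 ((hC d.adj).mp h1)

lemma star_iso_of_center {V : Type*} [Fintype V] {T : SimpleGraph V} {n : ℕ}
    (hn : Fintype.card V = n) (hpc : T.Preconnected) (w : V)
    (hw : ∀ ⦃a b⦄, T.Adj a b → a = w ∨ b = w) :
    Nonempty (T ≃g _root_.starGraph n) := by
  haveI : Nonempty V := ⟨w⟩
  haveI : NeZero n := ⟨by rw [← hn]; exact Fintype.card_pos.ne'⟩
  have hadjw : ∀ a : V, a ≠ w → T.Adj a w := by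
    intro a ha
    obtain ⟨p⟩ := hpc a w
    cases p with
    | nil => exact absurd rfl ha
    | cons h q =>
      rcases hw h with h1 | h2
      · exact absurd h1 ha
      · rwa [h2] at h
  let e0 := Fintype.equivFinOfCardEq hn
  let e := e0.trans (Equiv.swap (e0 w) 0)
  have hew : e w = 0 := by simp [e, Equiv.swap_apply_left]
  have he0 : ∀ a, e a = 0 ↔ a = w := by
    intro a
    constructor
    · intro h; exact e.injective (h.trans hew.symm)
    · rintro rfl; exact hew
  refine ⟨⟨e, ?_⟩⟩
  intro a b
  show (e a ≠ e b ∧ ((e a).val = 0 ∨ (e b).val = 0)) ↔ T.Adj a b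
  have hv : ∀ i : Fin n, i.val = 0 ↔ i = 0 := fun i => by
    rw [Fin.ext_iff]; simp
  constructor
  · rintro ⟨hne, h0⟩
    rw [hv, hv, he0, he0] at h0
    rcases h0 with rfl | rfl
    · exact (hadjw b (fun hb => hne (by rw [hb]))).symm
    · exact hadjw a (fun ha => hne (by rw [ha]))
  · intro hab
    refine ⟨fun h => hab.ne (e.injective h), ?_⟩
    rw [hv, hv, he0, he0]
    exact hw hab

lemma two_le_cover {V : Type*} [Fintype V] {T : SimpleGraph V} {n : ℕ}
    (hn : Fintype.card V = n) (hT : T.IsTree) (hstar : IsEmpty (T ≃g _root_.starGraph n))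
    (h3 : 3 ≤ n) (A : Finset V) (hA : ∀ ⦃a b⦄, T.Adj a b → a ∈ A ∨ b ∈ A) :
    2 ≤ A.card := by
  obtain ⟨a, b, hab⟩ : ∃ a b : V, a ≠ b :=
    Fintype.exists_pair_of_one_lt_card (by rw [hn]; omega)
  have hedge : ∃ x y : V, T.Adj x y := by
    obtain ⟨p⟩ := hT.isConnected.preconnected a b
    cases p with
    | nil => exact absurd rfl hab
    | cons h q => exact ⟨_, _, h⟩
  by_contra hc
  push_neg at hc
  obtain ⟨x, y, hxy⟩ := hedge
  have hne : A.Nonempty := by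
    rcases hA hxy with h | h
    exacts [⟨x, h⟩, ⟨y, h⟩]
  have h1 : A.card = 1 := le_antisymm (by omega) hne.card_pos
  obtain ⟨w, hw⟩ := Finset.card_eq_one.mp h1
  refine hstar.elim' ?_
  have := star_iso_of_center hn hT.isConnected.preconnected w (fun a b hab => by
    rcases hA hab with h | h <;> rw [hw] at h <;> simp at h
    · exact Or.inl h
    · exact Or.inr h)
  exact this.some

lemma star_decycle_ub {V : Type*} [Fintype V] {T : SimpleGraph V} {n' : ℕ}
    (h2 : 2 ≤ n') (hT : T.IsTree) (v0 : V) :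
    ∃ S : Finset (V × Fin n'), S.card = Fintype.card V - 1 ∧
      ((T.boxProd (_root_.starGraph n')).induce ((↑S : Set (V × Fin n'))ᶜ)).IsAcyclic := by
  haveI : NeZero n' := ⟨by omega⟩
  classical
  set G := T.boxProd (_root_.starGraph n') with hG
  refine ⟨(univ.erase v0).image (fun v => (v, (0 : Fin n'))), ?_, ?_⟩
  · rw [Finset.card_image_of_injective _ (fun a b h => congrArg Prod.fst h),
      Finset.card_erase_of_mem (mem_univ _), Finset.card_univ]
  set S : Finset (V × Fin n') := (univ.erase v0).image (fun v => (v, (0 : Fin n'))) with hS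
  have memW : ∀ x (i : Fin n'), ((x, i) ∈ ((↑S : Set (V × Fin n'))ᶜ)) ↔ (i ≠ 0 ∨ x = v0) := by
    intro x i
    rw [Set.mem_compl_iff, Finset.mem_coe, hS, Finset.mem_image]
    constructor
    · intro h
      by_contra hc
      push_neg at hc
      exact h ⟨x, by simp [hc.2], by rw [hc.1]⟩
    · rintro (h | h) ⟨a, ha, heq⟩ <;> (injection heq with h1 h2)
      · exact h h2.symm
      · exact (Finset.mem_erase.mp ha).1 (h1.trans h)
  set W : Set (V × Fin n') := ((↑S : Set (V × Fin n'))ᶜ) with hW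
  rw [isAcyclic_iff_forall_adj_isBridge]
  rintro ⟨⟨x, i⟩, hxW⟩ ⟨⟨y, i'⟩, hyW⟩ hadj
  have hGadj : G.Adj (x, i) (y, i') := hadj
  rw [isBridge_iff]
  unfold deleteEdges
  set p : ↥W := ⟨(x, i), hxW⟩ with hp
  set q : ↥W := ⟨(y, i'), hyW⟩ with hq
  set H' : SimpleGraph ↥W := (G.induce W) \ fromEdgeSet {s(p, q)} with hH'
  -- decompose adjacency of H'
  have hH'adj : ∀ a b : ↥W, H'.Adj a b →
      (G.Adj a.1 b.1 ∧ s(a, b) ≠ s(p, q)) := by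
    intro a b hab
    rw [hH', sdiff_adj] at hab
    refine ⟨hab.1, ?_⟩
    intro hcon
    exact hab.2 (by rw [fromEdgeSet_adj]; exact ⟨by simp [hcon], hab.1.ne⟩)
  rw [SimpleGraph.boxProd_adj] at hGadj
  rcases hGadj with ⟨hTxy, hii⟩ | ⟨hsii, hxy⟩
  · -- tree edge in layer i
    dsimp only at hTxy hii
    subst hii
    have hine : i ≠ 0 := by
      intro h0
      subst h0
      have h1 := (memW x 0).mp hxW
      have h2 := (memW y 0).mp hyW
      simp only [ne_eq, not_true_eq_false, false_or] at h1 h2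
      exact hTxy.ne (h1.trans h2.symm)
    -- tree bridge
    have htb : ¬ (T \ fromEdgeSet {s(x, y)}).Reachable x y := by
      have := (isAcyclic_iff_forall_adj_isBridge.mp hT.IsAcyclic) hTxy
      rw [isBridge_iff] at this
      exact this
    set R : Set V := {z | (T \ fromEdgeSet {s(x, y)}).Reachable x z} with hR
    have hxR : x ∈ R := Reachable.refl x
    have hyR : y ∉ R := htb
    have hRpres : ∀ ⦃a b : V⦄, T.Adj a b → s(a, b) ≠ s(x, y) → (a ∈ R ↔ b ∈ R) := by
      intro a b hab hne
      have h' : (T \ fromEdgeSet {s(x, y)}).Adj a b := by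
        rw [sdiff_adj, fromEdgeSet_adj]
        exact ⟨hab, fun h => hne (by simpa using h.1)⟩
      exact ⟨fun h => h.trans h'.reachable, fun h => h.trans h'.symm.reachable⟩
    set Z : Set V := if v0 ∈ R then Rᶜ else R with hZ
    have hZv0 : v0 ∉ Z := by
      by_cases h : v0 ∈ R <;> simp [hZ, h]
    have hZpres : ∀ ⦃a b : V⦄, T.Adj a b → s(a, b) ≠ s(x, y) → (a ∈ Z ↔ b ∈ Z) := by
      intro a b hab hne
      by_cases h : v0 ∈ R <;> simp [hZ, h, hRpres hab hne]
    have hxyZ : (x ∈ Z ∧ y ∉ Z) ∨ (y ∈ Z ∧ x ∉ Z) := by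
      by_cases h : v0 ∈ R
      · right; simp [hZ, h, hxR, hyR]
      · left; simp [hZ, h, hxR, hyR]
    set C : Set ↥W := {r | r.1.2 = i ∧ r.1.1 ∈ Z} with hC
    have hcut : ∀ ⦃a b : ↥W⦄, H'.Adj a b → (a ∈ C ↔ b ∈ C) := by
      rintro ⟨⟨ax, ai⟩, haW⟩ ⟨⟨bx, bi⟩, hbW⟩ hab
      obtain ⟨hGab, hne⟩ := hH'adj _ _ hab
      rw [SimpleGraph.boxProd_adj] at hGab
      rcases hGab with ⟨hTab, hab2⟩ | ⟨hsab, hab1⟩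
      · dsimp only at hTab hab2
        subst hab2
        by_cases hlay : ai = i
        · subst hlay
          have hsne : s(ax, bx) ≠ s(x, y) := by
            intro hcon
            apply hne
            rw [Sym2.eq_iff] at hcon ⊢
            rcases hcon with ⟨rfl, rfl⟩ | ⟨rfl, rfl⟩
            · exact Or.inl ⟨rfl, rfl⟩
            · exact Or.inr ⟨rfl, rfl⟩
          simp only [hC, Set.mem_setOf_eq]
          simp [hZpres hTab hsne]
        · simp only [hC, Set.mem_setOf_eq]
          simp [hlay]
      · -- column edge: both fst equal, one layer is 0, so fst = v0
        dsimp only at hsab hab1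
        subst hab1
        have hv0 : ax = v0 := by
          rcases hsab.2 with h0 | h0
          · have := (memW ax ai).mp haW
            rcases this with h | h
            · exact absurd (Fin.ext h0) h
            · exact h
          · have := (memW ax bi).mp hbW
            rcases this with h | h
            · exact absurd (Fin.ext h0) h
            · exact h
        subst hv0
        constructor
        · rintro ⟨-, hmem⟩; exact absurd hmem hZv0
        · rintro ⟨-, hmem⟩; exact absurd hmem hZv0
    rcases hxyZ with ⟨hx1, hy1⟩ | ⟨hy1, hx1⟩
    · exact no_cross_not_reachable hcut (show p ∈ C from ⟨rfl, hx1⟩)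
        (fun h => hy1 h.2)
    · intro hreach
      exact no_cross_not_reachable hcut (show q ∈ C from ⟨rfl, hy1⟩)
        (fun h => hx1 h.2) hreach.symm
  · -- column edge at v0
    dsimp only at hsii hxy
    have hine : i ≠ i' := hsii.1
    have hxv0 : x = v0 := by
      rcases hsii.2 with h0 | h0
      · rcases (memW x i).mp hxW with h | h
        · exact absurd (Fin.ext h0) h
        · exact h
      · rcases (memW y i').mp hyW with h | h
        · exact absurd (Fin.ext h0) h
        · rw [← hxy] at h; exact h
    have hyv0 : y = v0 := hxy ▸ hxv0
    have main : ∀ (j0 : Fin n'), j0 ≠ 0 → (i = j0 ∧ i' = 0) ∨ (i = 0 ∧ i' = j0) →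
        ¬ H'.Reachable p q := by
      intro j0 hj0 hcases
      set C : Set ↥W := {r | r.1.2 = j0} with hC
      have hcut : ∀ ⦃a b : ↥W⦄, H'.Adj a b → (a ∈ C ↔ b ∈ C) := by
        rintro ⟨⟨ax, ai⟩, haW⟩ ⟨⟨bx, bi⟩, hbW⟩ hab
        obtain ⟨hGab, hne⟩ := hH'adj _ _ hab
        rw [SimpleGraph.boxProd_adj] at hGab
        rcases hGab with ⟨hTab, hab2⟩ | ⟨hsab, hab1⟩
        · dsimp only at hab2
          subst hab2
          simp [hC]
        · dsimp only at hsab hab1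
          subst hab1
          have hav0 : ax = v0 := by
            rcases hsab.2 with h0 | h0
            · rcases (memW ax ai).mp haW with h | h
              · exact absurd (Fin.ext h0) h
              · exact h
            · rcases (memW ax bi).mp hbW with h | h
              · exact absurd (Fin.ext h0) h
              · exact h
          simp only [hC, Set.mem_setOf_eq]
          constructor
          · intro haj
            exfalso
            have hbi0 : bi = 0 := by
              rcases hsab.2 with h0 | h0
              · exact absurd (Fin.ext h0) (haj ▸ hj0)
              · exact Fin.ext h0
            apply hne
            have ha' : (⟨(ax, ai), haW⟩ : ↥W).val = (v0, j0) := by subst hav0; subst haj; rfl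
            have hb' : (⟨(ax, bi), hbW⟩ : ↥W).val = (v0, 0) := by subst hav0; subst hbi0; rfl
            rcases hcases with ⟨hi, hi'⟩ | ⟨hi, hi'⟩
            · have hap : (⟨(ax, ai), haW⟩ : ↥W) = p := Subtype.ext (by rw [ha', hp]; simp [hxv0, hi])
              have hbq : (⟨(ax, bi), hbW⟩ : ↥W) = q := Subtype.ext (by rw [hb', hq]; simp [hyv0, hi'])
              rw [hap, hbq]
            · have hap : (⟨(ax, ai), haW⟩ : ↥W) = q := Subtype.ext (by rw [ha', hq]; simp [hyv0, hi'])
              have hbq : (⟨(ax, bi), hbW⟩ : ↥W) = p := Subtype.ext (by rw [hb', hp]; simp [hxv0, hi])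
              rw [hap, hbq, Sym2.eq_swap]
          · intro hbj
            exfalso
            have hai0 : ai = 0 := by
              rcases hsab.2 with h0 | h0
              · exact Fin.ext h0
              · exact absurd (Fin.ext h0) (hbj ▸ hj0)
            apply hne
            have ha' : (⟨(ax, ai), haW⟩ : ↥W).val = (v0, 0) := by subst hav0; subst hai0; rfl
            have hb' : (⟨(ax, bi), hbW⟩ : ↥W).val = (v0, j0) := by subst hav0; subst hbj; rfl
            rcases hcases with ⟨hi, hi'⟩ | ⟨hi, hi'⟩
            · have hap : (⟨(ax, ai), haW⟩ : ↥W) = q := Subtype.ext (by rw [ha', hq]; simp [hyv0, hi'])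
              have hbq : (⟨(ax, bi), hbW⟩ : ↥W) = p := Subtype.ext (by rw [hb', hp]; simp [hxv0, hi])
              rw [hap, hbq, Sym2.eq_swap]
            · have hap : (⟨(ax, ai), haW⟩ : ↥W) = p := Subtype.ext (by rw [ha', hp]; simp [hxv0, hi])
              have hbq : (⟨(ax, bi), hbW⟩ : ↥W) = q := Subtype.ext (by rw [hb', hq]; simp [hyv0, hi'])
              rw [hap, hbq]
      rcases hcases with ⟨hi, hi'⟩ | ⟨hi, hi'⟩
      · exact no_cross_not_reachable hcut (show p ∈ C from hi)
          (show q ∉ C from by simp [hC, hq, hi', Ne.symm hj0])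
      · intro hreach
        exact no_cross_not_reachable hcut (show q ∈ C from hi')
          (show p ∉ C from by simp [hC, hp, hi, Ne.symm hj0]) hreach.symm
    rcases hsii.2 with h0 | h0
    · have hi0 : i = 0 := Fin.ext h0
      have hi'0 : i' ≠ 0 := fun h => hine (hi0.trans h.symm)
      exact main i' hi'0 (Or.inr ⟨hi0, rfl⟩)
    · have hi'0 : i' = 0 := Fin.ext h0
      have hi0 : i ≠ 0 := fun h => hine (h.trans hi'0.symm)
      exact main i hi0 (Or.inl ⟨rfl, hi'0⟩)

lemma star_decycle_lb {V : Type*} [Fintype V] {T : SimpleGraph V} {n n' : ℕ}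
    (hn : Fintype.card V = n) (h2 : 2 ≤ n') (hn'n : n' < n)
    (hT : T.IsTree) (hstar : IsEmpty (T ≃g _root_.starGraph n))
    (S : Finset (V × Fin n'))
    (hac : ((T.boxProd (_root_.starGraph n')).induce ((↑S : Set (V × Fin n'))ᶜ)).IsAcyclic) :
    n' ≤ S.card := by
  classical
  haveI : NeZero n' := ⟨by omega⟩
  set G := T.boxProd (_root_.starGraph n') with hG
  set W : Set (V × Fin n') := ((↑S : Set (V × Fin n'))ᶜ) with hW
  have memW : ∀ x : V × Fin n', x ∈ W ↔ x ∉ S := fun x => by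
    rw [hW, Set.mem_compl_iff, Finset.mem_coe]
  have hbr := isAcyclic_iff_forall_adj_isBridge.mp hac
  have mkAdj : ∀ (e : Sym2 ↥W) (a b : ↥W), G.Adj a.1 b.1 → s(a, b) ≠ e →
      ((G.induce W) \ fromEdgeSet {e}).Adj a b := by
    intro e a b h hne
    rw [sdiff_adj, fromEdgeSet_adj]
    exact ⟨h, fun hc => hne (by simpa using hc.1)⟩
  have sym2ne : ∀ {a b c d : ↥W}, (a.1 ≠ c.1 ∨ b.1 ≠ d.1) → (a.1 ≠ d.1 ∨ b.1 ≠ c.1) →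
      s(a, b) ≠ s(c, d) := by
    intro a b c d h1 h2 h
    rw [Sym2.eq_iff] at h
    rcases h with ⟨rfl, rfl⟩ | ⟨rfl, rfl⟩
    · rcases h1 with h | h <;> exact h rfl
    · rcases h2 with h | h <;> exact h rfl
  have pne1 : ∀ {x y : V} {i i' : Fin n'}, x ≠ y → (x, i) ≠ (y, i') :=
    fun h hh => h (congrArg Prod.fst hh)
  have pne2 : ∀ {x y : V} {i i' : Fin n'}, i ≠ i' → (x, i) ≠ (y, i') :=
    fun h hh => h (congrArg Prod.snd hh)
  -- K1 : blocked 4-cycles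
  have K1 : ∀ (j : Fin n'), j ≠ 0 → ∀ u v : V, T.Adj u v →
      (u, (0 : Fin n')) ∉ S → (v, (0 : Fin n')) ∉ S → (u, j) ∉ S → (v, j) ∉ S → False := by
    intro j hj0 u v huv hu0 hv0 huj hvj
    have pu0 : ↥W := ⟨(u, 0), (memW _).mpr hu0⟩
    have hadj : (G.induce W).Adj ⟨(u, 0), (memW _).mpr hu0⟩ ⟨(v, 0), (memW _).mpr hv0⟩ := by
      show G.Adj (u, 0) (v, 0)
      rw [hG, SimpleGraph.boxProd_adj]
      exact Or.inl ⟨huv, rfl⟩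
    have hbridge := hbr hadj
    rw [isBridge_iff] at hbridge
    apply hbridge
    set e : Sym2 ↥W := s(⟨(u, 0), (memW _).mpr hu0⟩, ⟨(v, 0), (memW _).mpr hv0⟩) with he
    have a1 := mkAdj e ⟨(u, 0), (memW _).mpr hu0⟩ ⟨(u, j), (memW _).mpr huj⟩
      (by rw [hG, SimpleGraph.boxProd_adj]; exact Or.inr ⟨⟨fun h => hj0 h.symm, Or.inl rfl⟩, rfl⟩)
      (sym2ne (Or.inr (pne2 hj0)) (Or.inl (pne1 huv.ne)))
    have a2 := mkAdj e ⟨(u, j), (memW _).mpr huj⟩ ⟨(v, j), (memW _).mpr hvj⟩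
      (by rw [hG, SimpleGraph.boxProd_adj]; exact Or.inl ⟨huv, rfl⟩)
      (sym2ne (Or.inl (pne2 hj0)) (Or.inl (pne2 hj0)))
    have a3 := mkAdj e ⟨(v, j), (memW _).mpr hvj⟩ ⟨(v, 0), (memW _).mpr hv0⟩
      (by rw [hG, SimpleGraph.boxProd_adj]; exact Or.inr ⟨⟨hj0, Or.inr rfl⟩, rfl⟩)
      (sym2ne (Or.inl (pne1 huv.ne.symm)) (Or.inl (pne2 hj0)))
    exact (a1.reachable.trans a2.reachable).trans a3.reachable
  -- K2 : blocked long cycles through two empty leaf layers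
  have K2 : ∀ (j k : Fin n'), j ≠ 0 → k ≠ 0 → j ≠ k →
      (∀ x : V, (x, j) ∉ S) → (∀ x : V, (x, k) ∉ S) →
      ∀ u v : V, u ≠ v → (u, (0 : Fin n')) ∉ S → (v, (0 : Fin n')) ∉ S → False := by
    intro j k hj0 hk0 hjk hLj hLk u v huv hu0 hv0
    have hadj : (G.induce W).Adj ⟨(u, 0), (memW _).mpr hu0⟩ ⟨(u, j), (memW _).mpr (hLj u)⟩ := by
      show G.Adj (u, 0) (u, j)
      rw [hG, SimpleGraph.boxProd_adj]
      exact Or.inr ⟨⟨fun h => hj0 h.symm, Or.inl rfl⟩, rfl⟩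
    have hbridge := hbr hadj
    rw [isBridge_iff] at hbridge
    apply hbridge
    set e : Sym2 ↥W := s(⟨(u, 0), (memW _).mpr hu0⟩, ⟨(u, j), (memW _).mpr (hLj u)⟩) with he
    set H' : SimpleGraph ↥W := (G.induce W) \ fromEdgeSet {e} with hH'
    -- layer homs
    have φmap : ∀ (m : Fin n'), m ≠ 0 → m ≠ j → (hm : ∀ x : V, (x, m) ∉ S) →
        ∀ a b : V, T.Adj a b → H'.Adj ⟨(a, m), (memW _).mpr (hm a)⟩ ⟨(b, m), (memW _).mpr (hm b)⟩ := by
      intro m hm0 hmj hm a b hab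
      apply mkAdj
      · rw [hG, SimpleGraph.boxProd_adj]; exact Or.inl ⟨hab, rfl⟩
      · exact sym2ne (Or.inl (pne2 hm0)) (Or.inl (pne2 hmj))
    have hreach : ∀ (m : Fin n'), m ≠ 0 → m ≠ j → (hm : ∀ x : V, (x, m) ∉ S) →
        ∀ a b : V, H'.Reachable ⟨(a, m), (memW _).mpr (hm a)⟩ ⟨(b, m), (memW _).mpr (hm b)⟩ := by
      intro m hm0 hmj hm a b
      let φ : T →g H' :=
        { toFun := fun x => ⟨(x, m), (memW _).mpr (hm x)⟩
          map_rel' := fun h => φmap m hm0 hmj hm _ _ h }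
      exact Reachable.map φ (hT.isConnected.preconnected a b)
    -- also layer j reachability (edge e is a column at u, layer-j tree edges avoid it unless touching (u,j)?)
    have φmapj : ∀ a b : V, T.Adj a b → H'.Adj ⟨(a, j), (memW _).mpr (hLj a)⟩ ⟨(b, j), (memW _).mpr (hLj b)⟩ := by
      intro a b hab
      apply mkAdj
      · rw [hG, SimpleGraph.boxProd_adj]; exact Or.inl ⟨hab, rfl⟩
      · exact sym2ne (Or.inl (pne2 hj0)) (Or.inr (pne2 hj0))
    have hreachj : ∀ a b : V, H'.Reachable ⟨(a, j), (memW _).mpr (hLj a)⟩ ⟨(b, j), (memW _).mpr (hLj b)⟩ := by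
      intro a b
      let φ : T →g H' :=
        { toFun := fun x => ⟨(x, j), (memW _).mpr (hLj x)⟩
          map_rel' := fun h => φmapj _ _ h }
      exact Reachable.map φ (hT.isConnected.preconnected a b)
    -- chain : (u,0) ~ (u,k) ~* (v,k) ~ (v,0) ~ (v,j) ~* (u,j)
    have a1 := mkAdj e ⟨(u, 0), (memW _).mpr hu0⟩ ⟨(u, k), (memW _).mpr (hLk u)⟩
      (by rw [hG, SimpleGraph.boxProd_adj]; exact Or.inr ⟨⟨fun h => hk0 h.symm, Or.inl rfl⟩, rfl⟩)
      (sym2ne (Or.inr (pne2 (Ne.symm hjk))) (Or.inl (pne2 (Ne.symm hj0))))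
    have a2 := mkAdj e ⟨(v, k), (memW _).mpr (hLk v)⟩ ⟨(v, 0), (memW _).mpr hv0⟩
      (by rw [hG, SimpleGraph.boxProd_adj]; exact Or.inr ⟨⟨hk0, Or.inr rfl⟩, rfl⟩)
      (sym2ne (Or.inl (pne2 hk0)) (Or.inl (pne2 (fun h => hjk h.symm))))
    have a3 := mkAdj e ⟨(v, 0), (memW _).mpr hv0⟩ ⟨(v, j), (memW _).mpr (hLj v)⟩
      (by rw [hG, SimpleGraph.boxProd_adj]; exact Or.inr ⟨⟨fun h => hj0 h.symm, Or.inl rfl⟩, rfl⟩)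
      (sym2ne (Or.inl (pne1 huv.symm)) (Or.inl (pne2 (Ne.symm hj0))))
    exact (((a1.reachable.trans (hreach k hk0 (fun h => hjk h.symm) hLk u v)).trans
      a2.reachable).trans a3.reachable).trans (hreachj v u)
  -- counting
  have h3 : 3 ≤ n := by omega
  set L : Fin n' → Finset (V × Fin n') := fun i => S.filter (fun p => p.2 = i) with hL
  set A : Fin n' → Finset V := fun i => (L i).image Prod.fst with hA
  have memA : ∀ (i : Fin n') (x : V), x ∈ A i ↔ (x, i) ∈ S := by
    intro i x
    rw [hA]
    simp only [Finset.mem_image, hL, Finset.mem_filter]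
    constructor
    · rintro ⟨⟨px, pi⟩, ⟨hpS, hpi⟩, hpx⟩
      dsimp only at hpi hpx
      rw [← hpx, ← hpi]; exact hpS
    · intro h; exact ⟨(x, i), ⟨h, rfl⟩, rfl⟩
  have hsum : ∑ i : Fin n', (L i).card = S.card :=
    (Finset.card_eq_sum_card_fiberwise (fun x _ => Finset.mem_univ x.2)).symm
  by_contra hlt
  push_neg at hlt
  by_cases h0 : L 0 = ∅
  · -- every leaf layer carries a vertex cover
    have hcov : ∀ j : Fin n', j ≠ 0 → 2 ≤ (L j).card := by
      intro j hj0
      refine le_trans (two_le_cover hn hT hstar h3 (A j) ?_) (Finset.card_image_le)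
      intro a b hab
      by_contra hc
      push_neg at hc
      have ha0 : (a, (0 : Fin n')) ∉ S := by
        intro h
        have hmem : (a, (0 : Fin n')) ∈ L 0 := Finset.mem_filter.mpr ⟨h, rfl⟩
        rw [h0] at hmem
        exact Finset.notMem_empty _ hmem
      have hb0 : (b, (0 : Fin n')) ∉ S := by
        intro h
        have hmem : (b, (0 : Fin n')) ∈ L 0 := Finset.mem_filter.mpr ⟨h, rfl⟩
        rw [h0] at hmem
        exact Finset.notMem_empty _ hmem
      exact K1 j hj0 a b hab ha0 hb0 ((memA j a).not.mp hc.1) ((memA j b).not.mp hc.2)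
    have hbig : (univ.erase (0 : Fin n')).card • 2 ≤ ∑ j ∈ univ.erase (0 : Fin n'), (L j).card :=
      Finset.card_nsmul_le_sum _ _ _ (fun j hj => hcov j (Finset.mem_erase.mp hj).1)
    have hle : ∑ j ∈ univ.erase (0 : Fin n'), (L j).card ≤ S.card := by
      rw [← hsum]
      exact Finset.sum_le_sum_of_subset (Finset.erase_subset _ _)
    rw [Finset.card_erase_of_mem (mem_univ _), Finset.card_univ, Fintype.card_fin] at hbig
    simp only [smul_eq_mul] at hbig
    omega
  · -- layer 0 is nonempty
    have hs0 : 1 ≤ (L 0).card := Finset.card_pos.mpr (Finset.nonempty_iff_ne_empty.mpr h0)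
    set NEmp := (univ.erase (0 : Fin n')).filter (fun j => L j ≠ ∅) with hNEmp
    set Emp := (univ.erase (0 : Fin n')).filter (fun j => L j = ∅) with hEmp
    have hsplit : Emp.card + NEmp.card = n' - 1 := by
      rw [hEmp, hNEmp, Finset.card_filter_add_card_filter_not,
        Finset.card_erase_of_mem (mem_univ _), Finset.card_univ, Fintype.card_fin]
    have hNE : NEmp.card + (L 0).card ≤ S.card := by
      have h1 : NEmp.card • 1 ≤ ∑ j ∈ NEmp, (L j).card :=
        Finset.card_nsmul_le_sum _ _ _ (fun j hj =>
          Finset.card_pos.mpr (Finset.nonempty_iff_ne_empty.mpr (Finset.mem_filter.mp hj).2))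
      have h2 : ∑ j ∈ NEmp, (L j).card ≤ ∑ j ∈ univ.erase (0 : Fin n'), (L j).card :=
        Finset.sum_le_sum_of_subset (Finset.filter_subset _ _)
      have h3' : (L 0).card + ∑ j ∈ univ.erase (0 : Fin n'), (L j).card = S.card := by
        rw [← hsum]
        exact Finset.add_sum_erase univ (fun i => (L i).card) (mem_univ (0 : Fin n'))
      simp only [smul_eq_mul, mul_one] at h1
      omega
    have hEmpMem : ∀ j ∈ Emp, j ≠ 0 ∧ ∀ x : V, (x, j) ∉ S := by
      intro j hj
      obtain ⟨hj1, hj2⟩ := Finset.mem_filter.mp hj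
      refine ⟨(Finset.mem_erase.mp hj1).1, fun x hx => ?_⟩
      have hmem : (x, j) ∈ L j := Finset.mem_filter.mpr ⟨hx, rfl⟩
      rw [hj2] at hmem
      exact Finset.notMem_empty _ hmem
    -- step 1 : get one empty layer, conclude A 0 is a cover of size ≥ 2
    have hEmp1 : 1 ≤ Emp.card := by omega
    obtain ⟨j₁, hj₁⟩ := Finset.card_pos.mp (by omega : 0 < Emp.card)
    obtain ⟨hj₁0, hj₁S⟩ := hEmpMem j₁ hj₁
    have hcov0 : 2 ≤ (A 0).card := by
      refine two_le_cover hn hT hstar h3 (A 0) ?_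
      intro a b hab
      by_contra hc
      push_neg at hc
      exact K1 j₁ hj₁0 a b hab ((memA 0 a).not.mp hc.1) ((memA 0 b).not.mp hc.2)
        (hj₁S a) (hj₁S b)
    have hA0L : (A 0).card ≤ (L 0).card := Finset.card_image_le
    -- step 2 : two empty layers
    have hEmp2 : 2 ≤ Emp.card := by omega
    obtain ⟨j, hj, k, hk, hjk⟩ := Finset.one_lt_card.mp (by omega : 1 < Emp.card)
    obtain ⟨hj0, hjS⟩ := hEmpMem j hj
    obtain ⟨hk0, hkS⟩ := hEmpMem k hk
    -- step 3 : at most one vertex outside A 0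
    have hone : (univ \ A 0).card ≤ 1 := by
      rw [Finset.card_le_one]
      intro a ha b hb
      by_contra hab
      exact K2 j k hj0 hk0 hjk hjS hkS a b hab
        ((memA 0 a).not.mp (Finset.mem_sdiff.mp ha).2)
        ((memA 0 b).not.mp (Finset.mem_sdiff.mp hb).2)
    rw [Finset.card_sdiff_of_subset (Finset.subset_univ _), Finset.card_univ, hn] at hone
    have hL0S : (L 0).card ≤ S.card := Finset.card_le_card (Finset.filter_subset _ _)
    have hA0n : (A 0).card ≤ Fintype.card V := Finset.card_le_univ _
    omega

end Aux

theorem decycling_tree_boxProd_small_star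
    {V : Type*} [Fintype V]
    (T : SimpleGraph V) (n n' : ℕ)
    (hn : Fintype.card V = n) (h2 : 2 ≤ n') (hn'n : n' < n)
    (hT : T.IsTree) (hstar : IsEmpty (T ≃g _root_.starGraph n)) :
    n' ≤ decyclingNumber (T.boxProd (_root_.starGraph n')) ∧
      decyclingNumber (T.boxProd (_root_.starGraph n')) ≤ n - 1 := by
    classical
  haveI hne : Nonempty V := by
    rw [← Fintype.card_pos_iff, hn]; omega
  obtain ⟨v0⟩ := hne
  obtain ⟨S0, hS0card, hS0ac⟩ := star_decycle_ub h2 hT v0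
  have hmem : (Fintype.card V - 1) ∈ {k | ∃ S : Finset (V × Fin n'), S.card = k ∧
      ((T.boxProd (_root_.starGraph n')).induce ((↑S : Set (V × Fin n'))ᶜ)).IsAcyclic} :=
    ⟨S0, hS0card, hS0ac⟩
  constructor
  · rw [decyclingNumber]
    apply le_csInf ⟨_, hmem⟩
    rintro k ⟨S, rfl, hac⟩
    exact star_decycle_lb hn h2 hn'n hT hstar S hac
  · rw [decyclingNumber]
    have h := Nat.sInf_le hmem
    rwa [hn] at h
end

section
/- If n ≥ 1 and T is a tree of order n + 1 with n + 1 ≥ 2 that is not isomorphic to the star S_{n+1}, then ∇(S_n □ T) = n. -/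
open SimpleGraph

section Aux
open SimpleGraph Walk

variable {V : Type*} {G : SimpleGraph V}

lemma aux_concat_isPath {a b r : V} (p : G.Walk r a) (hp : p.IsPath) (hab : G.Adj a b)
    (hb : b ∉ p.support) : (p.concat hab).IsPath := by
  rw [isPath_def, support_concat, List.nodup_append]
  refine ⟨hp.support_nodup, List.nodup_singleton b, ?_⟩
  intro x hx y hy hxy
  simp only [List.mem_singleton] at hy
  subst hy
  subst hxy
  exact hb hx

lemma aux_not_mem_shortest [DecidableEq V] {r a b : V} (hne : a ≠ b) (p : G.Walk r b)
    (hlen : p.length = G.dist r b) (hle : G.dist r b ≤ G.dist r a) : a ∉ p.support := by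
  intro ha
  have h2 : G.dist r a ≤ (p.takeUntil a ha).length := dist_le _
  have h3 : (p.takeUntil a ha).length + (p.dropUntil a ha).length = p.length := by
    rw [← length_append, p.take_spec ha]
  have h4 : (p.dropUntil a ha).length = 0 := by omega
  exact hne (Walk.eq_of_length_eq_zero h4)

lemma aux_dist_ne (hG : G.IsAcyclic) {r a b : V} (hr : G.Reachable r a) (hab : G.Adj a b) :
    G.dist r a ≠ G.dist r b := by
  classical
  intro heq
  have hrb : G.Reachable r b := hr.trans hab.reachable
  obtain ⟨p, hp, hplen⟩ := hr.exists_path_of_dist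
  obtain ⟨q, hq, hqlen⟩ := hrb.exists_path_of_dist
  have hbp : b ∉ p.support := aux_not_mem_shortest (hab.ne.symm) p hplen (by omega)
  have hconc : (p.concat hab).IsPath := aux_concat_isPath p hp hab hbp
  have heq2 := hG.path_unique ⟨p.concat hab, hconc⟩ ⟨q, hq⟩
  have hlen2 : (p.concat hab).length = q.length := congrArg Walk.length (Subtype.ext_iff.mp heq2)
  rw [length_concat, hplen, hqlen] at hlen2
  omega

lemma aux_closer_unique (hG : G.IsAcyclic) {r v u₁ u₂ : V} (hr : G.Reachable r v)
    (h1 : G.Adj v u₁) (h2 : G.Adj v u₂)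
    (hd1 : G.dist r u₁ < G.dist r v) (hd2 : G.dist r u₂ < G.dist r v) : u₁ = u₂ := by
  classical
  have hr1 : G.Reachable r u₁ := hr.trans h1.reachable
  have hr2 : G.Reachable r u₂ := hr.trans h2.reachable
  obtain ⟨p₁, hp₁, hl₁⟩ := hr1.exists_path_of_dist
  obtain ⟨p₂, hp₂, hl₂⟩ := hr2.exists_path_of_dist
  have hv1 : v ∉ p₁.support := aux_not_mem_shortest h1.ne p₁ hl₁ (by omega)
  have hv2 : v ∉ p₂.support := aux_not_mem_shortest h2.ne p₂ hl₂ (by omega)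
  have hq1 : (p₁.concat h1.symm).IsPath := aux_concat_isPath p₁ hp₁ h1.symm hv1
  have hq2 : (p₂.concat h2.symm).IsPath := aux_concat_isPath p₂ hp₂ h2.symm hv2
  have heq := hG.path_unique ⟨p₁.concat h1.symm, hq1⟩ ⟨p₂.concat h2.symm, hq2⟩
  replace heq : p₁.concat h1.symm = p₂.concat h2.symm := Subtype.ext_iff.mp heq
  have hs : (p₁.concat h1.symm).reverse.support = (p₂.concat h2.symm).reverse.support :=
    congrArg Walk.support (congrArg Walk.reverse heq)
  rw [reverse_concat, reverse_concat, support_cons, support_cons,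
    support_eq_cons p₁.reverse, support_eq_cons p₂.reverse] at hs
  simp only [List.cons.injEq] at hs
  exact hs.2.1





lemma aux_forest_card [Fintype V] [Nonempty V] (hG : G.IsAcyclic) [Fintype G.edgeSet] :
    G.edgeFinset.card + 1 ≤ Fintype.card V := by
  classical
  set rt : V → V := fun v => (G.connectedComponentMk v).out with hrtdef
  have hreach : ∀ v, G.Reachable (rt v) v := fun v =>
    ConnectedComponent.eq.mp (Quot.out_eq _)
  have hrt_adj : ∀ {a b : V}, G.Adj a b → rt a = rt b := by
    intro a b hab
    simp only [hrtdef, ConnectedComponent.sound hab.reachable]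
  have hrt_rt : ∀ v, rt (rt v) = rt v := fun v =>
    congrArg Quot.out (Quot.out_eq (G.connectedComponentMk v))
  have hch : ∀ e ∈ G.edgeFinset, ∃ v, v ∈ e ∧ ∃ u, u ∈ e ∧ G.Adj v u ∧
      G.dist (rt v) u < G.dist (rt v) v := by
    intro e he
    rw [mem_edgeFinset] at he
    induction e with
    | _ x y =>
      have hxy : G.Adj x y := he
      have hne := aux_dist_ne hG (hreach x) hxy
      rcases lt_or_gt_of_ne hne with h | h
      · exact ⟨y, Sym2.mem_mk_right x y, x, Sym2.mem_mk_left x y, hxy.symm,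
          by rwa [← hrt_adj hxy]⟩
      · exact ⟨x, Sym2.mem_mk_left x y, y, Sym2.mem_mk_right x y, hxy, h⟩
  choose f hf1 hf2 using hch
  obtain ⟨v₀⟩ := ‹Nonempty V›
  have hcard : G.edgeFinset.card ≤ (Finset.univ.erase (rt v₀)).card := by
    apply Finset.card_le_card_of_injOn (fun e => if he : e ∈ G.edgeFinset then f e he else v₀)
    · intro e he
      rw [Finset.mem_coe] at he; simp only [he, dif_pos]
      obtain ⟨u, hu, hadj, hdist⟩ := hf2 e he
      refine Finset.mem_erase.mpr ⟨?_, Finset.mem_univ _⟩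
      intro hbad
      have h0 : rt (f e he) = f e he := by rw [hbad, hrt_rt]
      rw [h0, hbad] at hdist
      simp only [SimpleGraph.dist_self] at hdist
      omega
    · intro e₁ h₁ e₂ h₂ hfe
      simp only [Finset.mem_coe] at h₁ h₂
      simp only [h₁, h₂, dif_pos] at hfe
      by_contra hne
      obtain ⟨u₁, hu₁, hadj₁, hd₁⟩ := hf2 e₁ h₁
      obtain ⟨u₂, hu₂, hadj₂, hd₂⟩ := hf2 e₂ h₂
      rw [hfe] at hadj₁ hd₁
      set v := f e₂ h₂ with hv
      have he₁ : e₁ = s(v, u₁) := (Sym2.mem_and_mem_iff hadj₁.ne).mp ⟨hfe ▸ hf1 e₁ h₁, hu₁⟩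
      have he₂ : e₂ = s(v, u₂) := (Sym2.mem_and_mem_iff hadj₂.ne).mp ⟨hf1 e₂ h₂, hu₂⟩
      have : u₁ = u₂ := aux_closer_unique hG (hreach v) hadj₁ hadj₂ hd₁ hd₂
      exact hne (by rw [he₁, he₂, this])
  have h2 : (Finset.univ.erase (rt v₀)).card = Fintype.card V - 1 := by
    rw [Finset.card_erase_of_mem (Finset.mem_univ _), Finset.card_univ]
  have hpos : 1 ≤ Fintype.card V := Fintype.card_pos
  omega


lemma aux_acyclic_of_level {W : Type*} {H : SimpleGraph W} (f : W → ℕ)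
    (hf : ∀ v : W, {u : W | H.Adj v u ∧ f u ≤ f v}.Subsingleton) : H.IsAcyclic := by
  classical
  intro v p hp
  have hsupne : p.support.toFinset.Nonempty :=
    ⟨v, List.mem_toFinset.mpr p.start_mem_support⟩
  obtain ⟨M, hM, hmax⟩ := Finset.exists_max_image p.support.toFinset f hsupne
  rw [List.mem_toFinset] at hM
  have hmax' : ∀ x ∈ p.support, f x ≤ f M := fun x hx => hmax x (List.mem_toFinset.mpr hx)
  set q := p.rotate M hM with hqdef
  have hq : q.IsCycle := hp.rotate hM
  have hqtail : q.support.tail ~r p.support.tail := p.support_rotate M hM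
  have hqsupp : ∀ x ∈ q.support.tail, f x ≤ f M := by
    intro x hx
    exact hmax' x (List.mem_of_mem_tail (hqtail.perm.mem_iff.mp hx))
  have hlen : 3 ≤ q.length := hq.three_le_length
  clear_value q
  cases q with
  | nil => exact hq.not_nil Walk.Nil.nil
  | cons hadj r =>
    rename_i u
    -- hadj : H.Adj M u, r : H.Walk u M
    have hrn : r.support.Nodup := by
      have h := hq.support_nodup
      rwa [support_cons, List.tail_cons] at h
    have hrt : ∀ x ∈ r.support, f x ≤ f M := by
      intro x hx
      exact hqsupp x (by rwa [support_cons, List.tail_cons])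
    -- penultimate vertex via reverse of r
    cases hrev : r.reverse with
    | nil =>
      have : r.length = 0 := by
        have := congrArg Walk.length hrev
        simpa using this
      simp only [length_cons] at hlen
      omega
    | cons hadj' t =>
      rename_i u'
      -- hadj' : H.Adj M u', t : H.Walk u' u
      have hu : u ∈ r.support := r.start_mem_support
      have hu' : u' ∈ r.support := by
        have h4 : u' ∈ r.reverse.support := by rw [hrev, support_cons]; exact List.mem_cons_of_mem _ t.start_mem_support
        rwa [support_reverse, List.mem_reverse] at h4
      have h1 : u ∈ {x : W | H.Adj M x ∧ f x ≤ f M} := ⟨hadj, hrt u hu⟩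
      have h2 : u' ∈ {x : W | H.Adj M x ∧ f x ≤ f M} := ⟨hadj', hrt u' hu'⟩
      have huu : u' = u := hf M h2 h1
      subst huu
      have htn : t.support.Nodup := by
        have : r.reverse.support.Nodup := by
          rw [support_reverse]; exact List.nodup_reverse.mpr hrn
        rw [hrev, support_cons] at this
        exact (List.nodup_cons.mp this).2
      have htlen : 1 ≤ t.length := by
        have h3 := congrArg Walk.length hrev
        rw [length_reverse] at h3
        simp only [length_cons] at h3 hlen
        omega
      cases t with
      | nil => simp at htlen
      | cons h₃ t₃ =>
        have : u' ∈ t₃.support := t₃.end_mem_support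
        rw [support_cons] at htn
        exact (List.nodup_cons.mp htn).1 this


lemma aux_acyclic_mono {α : Type*} {β : Type*} {A : SimpleGraph α} {B : SimpleGraph β}
    (φ : A ↪g B) (h : B.IsAcyclic) : A.IsAcyclic := fun _v c hc =>
  h (c.map φ.toHom) ((SimpleGraph.Walk.map_isCycle_iff_of_injective φ.injective).mpr hc)




lemma aux_lower {V : Type*} [Fintype V] (T : SimpleGraph V) (n : ℕ) (hn3 : 3 ≤ n)
    (hcard : Fintype.card V = n + 1) (hT : T.IsTree)
    [DecidableRel T.Adj] (hdegle : ∀ v : V, T.degree v ≤ n - 1)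
    (S : Finset (Fin n × V)) (hScard : S.card = n - 1)
    (hacyc : (((_root_.starGraph n).boxProd T).induce ((↑S : Set (Fin n × V))ᶜ)).IsAcyclic) : False := by
  classical
  set c₀ : Fin n := ⟨0, by omega⟩ with hc₀
  set G := (_root_.starGraph n).boxProd T with hGdef
  have hTedges : T.edgeFinset.card = n := by
    have := hT.card_edgeFinset
    omega
  have hstar_adj : ∀ i j : Fin n, (_root_.starGraph n).Adj i j ↔ i ≠ j ∧ (i = c₀ ∨ j = c₀) := by
    intro i j
    show (i ≠ j ∧ (i.val = 0 ∨ j.val = 0)) ↔ _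
    constructor
    · rintro ⟨h, h0 | h0⟩
      · exact ⟨h, Or.inl (Fin.ext h0)⟩
      · exact ⟨h, Or.inr (Fin.ext h0)⟩
    · rintro ⟨h, h0 | h0⟩ <;> subst h0 <;> exact ⟨h, by simp [hc₀]⟩
  -- STEP A : G has at least 2n²-1 edges
  have stepA : 2*n*n - 1 ≤ G.edgeFinset.card := by
    set F1 : Finset (Sym2 (Fin n × V)) :=
      (Finset.univ ×ˢ T.edgeFinset).image (fun p => Sym2.map (fun x => (p.1, x)) p.2) with hF1
    set F2 : Finset (Sym2 (Fin n × V)) :=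
      ((Finset.univ.erase c₀) ×ˢ (Finset.univ : Finset V)).image
        (fun p => s(((c₀ : Fin n), p.2), (p.1, p.2))) with hF2
    have hF1sub : F1 ⊆ G.edgeFinset := by
      intro e he
      rw [hF1, Finset.mem_image] at he
      obtain ⟨⟨i, e'⟩, hmem, rfl⟩ := he
      rw [Finset.mem_product] at hmem
      have he' := hmem.2
      induction e' with
      | _ x y =>
        rw [Sym2.map_pair_eq, mem_edgeFinset, SimpleGraph.mem_edgeSet, hGdef, boxProd_adj]
        right
        exact ⟨by rwa [mem_edgeFinset, SimpleGraph.mem_edgeSet] at he', rfl⟩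
    have hF2sub : F2 ⊆ G.edgeFinset := by
      intro e he
      rw [hF2, Finset.mem_image] at he
      obtain ⟨⟨i, x⟩, hmem, rfl⟩ := he
      rw [Finset.mem_product, Finset.mem_erase] at hmem
      rw [mem_edgeFinset, SimpleGraph.mem_edgeSet, hGdef, boxProd_adj]
      left
      exact ⟨(hstar_adj c₀ i).mpr ⟨Ne.symm hmem.1.1, Or.inl rfl⟩, rfl⟩
    have hF1card : F1.card = n*n := by
      rw [hF1, Finset.card_image_of_injOn, Finset.card_product, Finset.card_univ,
        Fintype.card_fin, hTedges]
      rintro ⟨i, e⟩ hp ⟨i', e'⟩ hq heq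
      simp only at heq
      induction e with
      | _ x y =>
        induction e' with
        | _ x' y' =>
          rw [Sym2.map_pair_eq, Sym2.map_pair_eq, Sym2.eq_iff] at heq
          rcases heq with ⟨h1, h2⟩ | ⟨h1, h2⟩ <;>
            rw [Prod.mk.injEq] at h1 h2 <;>
            rw [Prod.mk.injEq]
          · exact ⟨h1.1, by rw [h1.2, h2.2]⟩
          · exact ⟨h1.1, by rw [h1.2, h2.2, Sym2.eq_swap]⟩
    have hF2card : F2.card = (n-1)*(n+1) := by
      rw [hF2, Finset.card_image_of_injOn, Finset.card_product, Finset.card_univ,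
        Finset.card_erase_of_mem (Finset.mem_univ _), Finset.card_univ, Fintype.card_fin, hcard]
      rintro ⟨i, x⟩ hp ⟨i', x'⟩ hq heq
      simp only [Sym2.eq_iff, Prod.mk.injEq] at heq
      rw [Finset.mem_coe, Finset.mem_product, Finset.mem_erase] at hp hq
      rcases heq with ⟨h1, h2⟩ | ⟨h1, h2⟩
      · rw [Prod.mk.injEq]
        exact ⟨h2.1, h1.2⟩
      · exact absurd h1.1.symm hq.1.1
    have hdisj : Disjoint F1 F2 := by
      rw [Finset.disjoint_left]
      intro e he1 he2
      rw [hF1, Finset.mem_image] at he1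
      rw [hF2, Finset.mem_image] at he2
      obtain ⟨⟨i, e'⟩, hmem1, heq1⟩ := he1
      obtain ⟨⟨i₂, x₂⟩, hmem2, heq2⟩ := he2
      rw [Finset.mem_product, Finset.mem_erase] at hmem2
      induction e' with
      | _ x y =>
        rw [Sym2.map_pair_eq] at heq1
        rw [← heq2] at heq1
        simp only [Sym2.eq_iff, Prod.mk.injEq] at heq1
        rcases heq1 with ⟨h1, h2⟩ | ⟨h1, h2⟩
        · exact hmem2.1.1 (h2.1.symm.trans h1.1)
        · exact hmem2.1.1 (h1.1.symm.trans h2.1)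
    have hcup : (F1 ∪ F2).card = n*n + (n-1)*(n+1) := by
      rw [Finset.card_union_of_disjoint hdisj, hF1card, hF2card]
    have hle := Finset.card_le_card (Finset.union_subset hF1sub hF2sub)
    rw [hcup] at hle
    obtain ⟨m, rfl⟩ : ∃ m, n = m + 1 := ⟨n-1, by omega⟩
    have e1 : (m+1)*(m+1) = m*m + 2*m + 1 := by ring
    have e2 : (m+1-1)*(m+1+1) = m*m + 2*m := by simp; ring
    have e3 : 2*(m+1)*(m+1) = 2*(m*m) + 4*m + 2 := by ring
    omega
  -- STEP B/C : split into surviving and removed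
  set Rem := G.edgeFinset.filter (fun e => ∃ v ∈ e, v ∈ S) with hRem
  set Surv := G.edgeFinset.filter (fun e => ¬ ∃ v ∈ e, v ∈ S) with hSurv
  have stepB : G.edgeFinset.card = Surv.card + Rem.card := by
    rw [hSurv, hRem, add_comm]
    exact (Finset.card_filter_add_card_filter_not (s := G.edgeFinset)
      (p := fun e => ∃ v ∈ e, v ∈ S)).symm
  have stepC : Surv.card ≤ n*n := by
    set H := G.induce ((↑S : Set (Fin n × V))ᶜ) with hH
    have hcompl : Fintype.card ((↑S : Set (Fin n × V))ᶜ : Set (Fin n × V)) = n*n + 1 := by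
      rw [Fintype.card_compl_set]
      simp only [Finset.coe_sort_coe, Fintype.card_coe, hScard, Fintype.card_prod,
        Fintype.card_fin, hcard]
      have h2 : n*(n+1) = n*n + n := by ring
      omega
    have hne : Nonempty ((↑S : Set (Fin n × V))ᶜ : Set (Fin n × V)) := by
      rw [← Fintype.card_pos_iff, hcompl]; omega
    have hforest := aux_forest_card hacyc
    rw [hcompl] at hforest
    have hsub : Surv ⊆ H.edgeFinset.image (Sym2.map (Subtype.val)) := by
      intro e he
      rw [hSurv, Finset.mem_filter] at he
      obtain ⟨heG, hnS⟩ := he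
      push_neg at hnS
      induction e with
      | _ p q =>
        rw [mem_edgeFinset, SimpleGraph.mem_edgeSet] at heG
        have hp : p ∈ ((↑S : Set (Fin n × V))ᶜ : Set (Fin n × V)) :=
          fun hc => hnS p (Sym2.mem_mk_left p q) hc
        have hq : q ∈ ((↑S : Set (Fin n × V))ᶜ : Set (Fin n × V)) :=
          fun hc => hnS q (Sym2.mem_mk_right p q) hc
        refine Finset.mem_image.mpr ⟨s(⟨p, hp⟩, ⟨q, hq⟩), ?_, ?_⟩
        · rw [mem_edgeFinset, SimpleGraph.mem_edgeSet]
          exact heG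
        · rfl
    calc Surv.card ≤ (H.edgeFinset.image (Sym2.map (Subtype.val))).card :=
          Finset.card_le_card hsub
      _ ≤ H.edgeFinset.card := Finset.card_image_le
      _ ≤ n*n := by omega
  have stepD : Rem.card ≤ n*n - 2 := by
    set A := S.filter (fun v => v.1 = c₀) with hA
    set B := S.filter (fun v => ¬ v.1 = c₀) with hB
    have hab : A.card + B.card = n - 1 := by
      rw [hA, hB, Finset.card_filter_add_card_filter_not, hScard]
    have hIncident : ∀ (v : Fin n × V) (F : Finset (Sym2 (Fin n × V))) (N : Finset (Fin n × V)),
        F ⊆ G.edgeFinset →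
        (∀ u, G.Adj v u → s(v, u) ∈ F → u ∈ N) →
        (F.filter (fun e => v ∈ e)).card ≤ N.card := by
      intro v F N hFsub hN
      apply Finset.card_le_card_of_injOn
        (fun e => if h : v ∈ e then (Sym2.Mem.other h) else v)
      · intro e he
        rw [Finset.mem_coe, Finset.mem_filter] at he
        obtain ⟨heF, hv⟩ := he
        simp only [hv, dif_pos]
        have hspec := Sym2.other_spec hv
        have hadj : e ∈ G.edgeSet := by rw [← mem_edgeFinset]; exact hFsub heF
        rw [← hspec, SimpleGraph.mem_edgeSet] at hadj
        exact hN _ hadj (by rw [hspec]; exact heF)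
      · intro e₁ h₁ e₂ h₂ heq
        rw [Finset.mem_coe, Finset.mem_filter] at h₁ h₂
        simp only [h₁.2, h₂.2, dif_pos] at heq
        rw [← Sym2.other_spec h₁.2, ← Sym2.other_spec h₂.2, heq]
    set RC := Rem.filter (fun e => ∀ v ∈ e, (v : Fin n × V).1 = c₀) with hRC
    set RN := Rem.filter (fun e => ¬ ∀ v ∈ e, (v : Fin n × V).1 = c₀) with hRN
    have hsplit : Rem.card = RC.card + RN.card := by
      rw [hRC, hRN, Finset.card_filter_add_card_filter_not]
    have hRemsub : Rem ⊆ G.edgeFinset := Finset.filter_subset _ _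
    have hRNsub : RN ⊆ G.edgeFinset := le_trans (Finset.filter_subset _ _) hRemsub
    have hRCcard : RC.card ≤ n := by
      have hsub : RC ⊆ T.edgeFinset.image (Sym2.map (fun x => ((c₀ : Fin n), x))) := by
        intro e he
        rw [hRC, Finset.mem_filter, hRem, Finset.mem_filter] at he
        obtain ⟨⟨heG, -⟩, hcen⟩ := he
        induction e with
        | _ p q =>
          rw [mem_edgeFinset, SimpleGraph.mem_edgeSet, hGdef, boxProd_adj] at heG
          have hp1 : p.1 = c₀ := hcen p (Sym2.mem_mk_left p q)
          have hq1 : q.1 = c₀ := hcen q (Sym2.mem_mk_right p q)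
          rcases heG with ⟨hs, -⟩ | ⟨ht, -⟩
          · replace hs : (_root_.starGraph n).Adj p.1 q.1 := hs
            rw [hstar_adj] at hs
            exact absurd (hp1.trans hq1.symm) hs.1
          · have hpe : ((c₀ : Fin n), p.2) = p := by rw [← hp1]
            have hqe : ((c₀ : Fin n), q.2) = q := by rw [← hq1]
            refine Finset.mem_image.mpr ⟨s(p.2, q.2), ?_, ?_⟩
            · rw [mem_edgeFinset, SimpleGraph.mem_edgeSet]; exact ht
            · rw [Sym2.map_pair_eq, hpe, hqe]
      calc RC.card ≤ _ := Finset.card_le_card hsub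
        _ ≤ T.edgeFinset.card := Finset.card_image_le
        _ = n := hTedges
    -- neighbour finsets
    have hNcenter : ∀ u : V, ∀ w : Fin n × V, G.Adj (c₀, u) w →
        (w.1 = c₀ ∧ T.Adj u w.2) ∨ (w = (w.1, u) ∧ w.1 ≠ c₀) := by
      rintro u ⟨j, y⟩ hadj
      rw [hGdef, boxProd_adj] at hadj
      rcases hadj with ⟨hs, hy⟩ | ⟨ht, hj⟩
      · replace hs : (_root_.starGraph n).Adj c₀ j := hs
        replace hy : u = y := hy
        rw [hstar_adj] at hs
        right
        constructor
        · simp [← hy]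
        · exact Ne.symm hs.1
      · replace ht : T.Adj u y := ht
        replace hj : (c₀ : Fin n) = j := hj
        exact Or.inl ⟨hj.symm, ht⟩
    have hNleaf : ∀ (i : Fin n) (u : V), i ≠ c₀ → ∀ w : Fin n × V, G.Adj (i, u) w →
        (w = ((c₀ : Fin n), u)) ∨ (w.1 = i ∧ T.Adj u w.2) := by
      rintro i u hi ⟨j, y⟩ hadj
      rw [hGdef, boxProd_adj] at hadj
      rcases hadj with ⟨hs, hy⟩ | ⟨ht, hj⟩
      · replace hs : (_root_.starGraph n).Adj i j := hs
        replace hy : u = y := hy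
        rw [hstar_adj] at hs
        left
        have hj : j = c₀ := by
          rcases hs.2 with h | h
          · exact absurd h hi
          · exact h
        rw [hj, ← hy]
      · replace ht : T.Adj u y := ht
        replace hj : i = j := hj
        exact Or.inr ⟨hj.symm, ht⟩
    -- per-vertex bounds
    have hleafbound : ∀ (i : Fin n) (u : V), i ≠ c₀ → ∀ F, F ⊆ G.edgeFinset →
        (F.filter (fun e => (i, u) ∈ e)).card ≤ n := by
      intro i u hi F hF
      have := hIncident (i, u) F
        ((T.neighborFinset u).image (fun y => (i, y)) ∪ {((c₀ : Fin n), u)}) hF ?_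
      · refine le_trans this (le_trans (Finset.card_union_le _ _) ?_)
        have h1 : ((T.neighborFinset u).image (fun y => (i, y))).card ≤ n - 1 :=
          le_trans Finset.card_image_le (by rw [card_neighborFinset_eq_degree]; exact hdegle u)
        have h2 : ({((c₀ : Fin n), u)} : Finset (Fin n × V)).card = 1 := rfl
        omega
      · intro w hadj hmem
        rcases hNleaf i u hi w hadj with h | h
        · exact Finset.mem_union_right _ (by rw [h]; exact Finset.mem_singleton_self _)
        · refine Finset.mem_union_left _ (Finset.mem_image.mpr ⟨w.2, ?_, ?_⟩)
          · rw [mem_neighborFinset]; exact h.2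
          · rw [← h.1]
    have hcenterboundRN : ∀ u : V, ((c₀ : Fin n), u) ∈ S →
        (RN.filter (fun e => ((c₀ : Fin n), u) ∈ e)).card ≤ n - 1 := by
      intro u _
      have := hIncident ((c₀ : Fin n), u) RN
        ((Finset.univ.erase c₀).image (fun j => (j, u))) hRNsub ?_
      · refine le_trans this (le_trans Finset.card_image_le ?_)
        rw [Finset.card_erase_of_mem (Finset.mem_univ _), Finset.card_univ, Fintype.card_fin]
      · intro w hadj hmem
        rcases hNcenter u w hadj with h | h
        · -- w is a center vertex: contradicts e ∈ RN (not all-center fails)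
          exfalso
          rw [hRN, Finset.mem_filter] at hmem
          apply hmem.2
          intro z hz
          rw [Sym2.mem_iff] at hz
          rcases hz with rfl | rfl
          · rfl
          · exact h.1
        · refine Finset.mem_image.mpr ⟨w.1, ?_, ?_⟩
          · exact Finset.mem_erase.mpr ⟨h.2, Finset.mem_univ _⟩
          · rw [← h.1]
    have hcenterboundRem : ∀ u : V,
        (Rem.filter (fun e => ((c₀ : Fin n), u) ∈ e)).card ≤ 2*(n-1) := by
      intro u
      have := hIncident ((c₀ : Fin n), u) Rem
        ((T.neighborFinset u).image (fun y => ((c₀ : Fin n), y)) ∪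
          (Finset.univ.erase c₀).image (fun j => (j, u))) hRemsub ?_
      · refine le_trans this (le_trans (Finset.card_union_le _ _) ?_)
        have h1 : ((T.neighborFinset u).image (fun y => ((c₀ : Fin n), y))).card ≤ n - 1 :=
          le_trans Finset.card_image_le (by rw [card_neighborFinset_eq_degree]; exact hdegle u)
        have h2 : ((Finset.univ.erase c₀).image (fun j : Fin n => (j, u))).card ≤ n - 1 := by
          refine le_trans Finset.card_image_le ?_
          rw [Finset.card_erase_of_mem (Finset.mem_univ _), Finset.card_univ, Fintype.card_fin]
        omega
      · intro w hadj hmem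
        rcases hNcenter u w hadj with h | h
        · refine Finset.mem_union_left _ (Finset.mem_image.mpr ⟨w.2, ?_, ?_⟩)
          · rw [mem_neighborFinset]; exact h.2
          · rw [← h.1]
        · refine Finset.mem_union_right _ (Finset.mem_image.mpr ⟨w.1, ?_, ?_⟩)
          · exact Finset.mem_erase.mpr ⟨h.2, Finset.mem_univ _⟩
          · rw [← h.1]
    -- covering lemma
    have hcover : ∀ F : Finset (Sym2 (Fin n × V)), F ⊆ Rem →
        F.card ≤ ∑ v ∈ S, (F.filter (fun e => v ∈ e)).card := by
      intro F hF
      have hsub : F ⊆ S.biUnion (fun v => F.filter (fun e => v ∈ e)) := by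
        intro e he
        have he' := hF he
        rw [hRem, Finset.mem_filter] at he'
        obtain ⟨-, v, hv, hvS⟩ := he'
        exact Finset.mem_biUnion.mpr ⟨v, hvS, Finset.mem_filter.mpr ⟨he, hv⟩⟩
      exact le_trans (Finset.card_le_card hsub) Finset.card_biUnion_le
    -- two global bounds
    have bound1 : RN.card ≤ A.card * (n-1) + B.card * n := by
      calc RN.card ≤ ∑ v ∈ S, (RN.filter (fun e => v ∈ e)).card :=
            hcover RN (Finset.filter_subset _ _)
        _ ≤ ∑ v ∈ S, (if v.1 = c₀ then n-1 else n) := by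
            apply Finset.sum_le_sum
            rintro ⟨i, u⟩ hv
            by_cases hic : i = c₀
            · rw [if_pos hic]; subst hic; exact hcenterboundRN u hv
            · rw [if_neg hic]; exact hleafbound i u hic RN hRNsub
        _ = A.card * (n-1) + B.card * n := by
            rw [← Finset.sum_filter_add_sum_filter_not S (fun v => v.1 = c₀), ← hA, ← hB]
            have e1 : ∀ v ∈ A, (if (v : Fin n × V).1 = c₀ then n-1 else n) = n-1 := by
              intro v hv; rw [hA, Finset.mem_filter] at hv; exact if_pos hv.2
            have e2 : ∀ v ∈ B, (if (v : Fin n × V).1 = c₀ then n-1 else n) = n := by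
              intro v hv; rw [hB, Finset.mem_filter] at hv; exact if_neg hv.2
            rw [Finset.sum_congr rfl e1, Finset.sum_congr rfl e2, Finset.sum_const,
              Finset.sum_const, smul_eq_mul, smul_eq_mul]
    have bound2 : Rem.card ≤ A.card * (2*(n-1)) + B.card * n := by
      calc Rem.card ≤ ∑ v ∈ S, (Rem.filter (fun e => v ∈ e)).card :=
            hcover Rem (le_refl _)
        _ ≤ ∑ v ∈ S, (if v.1 = c₀ then 2*(n-1) else n) := by
            apply Finset.sum_le_sum
            rintro ⟨i, u⟩ hv
            by_cases hic : i = c₀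
            · rw [if_pos hic]; subst hic; exact hcenterboundRem u
            · rw [if_neg hic]; exact hleafbound i u hic Rem hRemsub
        _ = A.card * (2*(n-1)) + B.card * n := by
            rw [← Finset.sum_filter_add_sum_filter_not S (fun v => v.1 = c₀), ← hA, ← hB]
            have e1 : ∀ v ∈ A, (if (v : Fin n × V).1 = c₀ then 2*(n-1) else n) = 2*(n-1) := by
              intro v hv; rw [hA, Finset.mem_filter] at hv; exact if_pos hv.2
            have e2 : ∀ v ∈ B, (if (v : Fin n × V).1 = c₀ then 2*(n-1) else n) = n := by
              intro v hv; rw [hB, Finset.mem_filter] at hv; exact if_neg hv.2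
            rw [Finset.sum_congr rfl e1, Finset.sum_congr rfl e2, Finset.sum_const,
              Finset.sum_const, smul_eq_mul, smul_eq_mul]
    -- final arithmetic
    obtain ⟨k, rfl⟩ : ∃ k, n = k + 3 := ⟨n - 3, by omega⟩
    set a := A.card
    set b := B.card
    have hsq : (k+3)*(k+3) = k*k + 6*k + 9 := by ring
    by_cases ha1 : a ≤ 1
    · interval_cases a
      · -- a = 0, b = k+2
        have hb : b = k + 2 := by omega
        rw [hb] at bound2
        have : (k+2)*(k+3) = k*k + 5*k + 6 := by ring
        omega
      · have hb : b = k + 1 := by omega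
        rw [hb] at bound2
        have : (k+1)*(k+3) = k*k + 4*k + 3 := by ring
        omega
    · have key : (k+2)*(k+3) = a*(k+2) + a + b*(k+3) := by
        have hba : a + b = k + 2 := by omega
        conv_lhs => rw [← hba]
        ring
      have h1 : (k+3) - 1 = k + 2 := by omega
      rw [h1] at bound1
      have hsq2 : (k+2)*(k+3) = k*k + 5*k + 6 := by ring
      omega
  have hsq : 2*n*n = n*n + n*n := by ring
  have hsq2 : 2 ≤ n*n := by nlinarith
  omega

lemma aux_upper {V : Type*} [Fintype V]
    (T : SimpleGraph V) (n : ℕ) (hn1 : 1 ≤ n)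
    (hcard : Fintype.card V = n + 1)
    (hT : T.IsTree) :
    ∃ S : Finset (Fin n × V), S.card = n ∧
      (((_root_.starGraph n).boxProd T).induce ((↑S : Set (Fin n × V))ᶜ)).IsAcyclic := by
  classical
  have hVne : Nonempty V := Fintype.card_pos_iff.mp (by omega)
  set c₀ : Fin n := ⟨0, by omega⟩ with hc₀
  set w₀ : V := Classical.arbitrary V with hw₀
  set S₀ : Finset (Fin n × V) := (Finset.univ.erase w₀).image (fun x => (c₀, x)) with hS₀
  have hmem : ∀ j y, ((j, y) ∈ S₀ ↔ (j = c₀ ∧ y ≠ w₀)) := by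
    intro j y
    simp only [hS₀, Finset.mem_image, Finset.mem_erase, Finset.mem_univ, and_true,
      Prod.mk.injEq]
    constructor
    · rintro ⟨x, hx, rfl, rfl⟩; exact ⟨rfl, hx⟩
    · rintro ⟨rfl, hy⟩; exact ⟨y, hy, rfl, rfl⟩
  refine ⟨S₀, ?_, ?_⟩
  · rw [Finset.card_image_of_injective _ (fun x y h => (Prod.mk.injEq _ _ _ _).mp h |>.2),
      Finset.card_erase_of_mem (Finset.mem_univ _), Finset.card_univ, hcard]
    omega
  · set G := (_root_.starGraph n).boxProd T with hG
    have hreach : ∀ x : V, T.Reachable w₀ x := fun x => hT.isConnected.preconnected w₀ x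
    have hstar_adj : ∀ i j : Fin n, (_root_.starGraph n).Adj i j ↔ i ≠ j ∧ (i = c₀ ∨ j = c₀) := by
      intro i j
      show (i ≠ j ∧ (i.val = 0 ∨ j.val = 0)) ↔ _
      constructor
      · rintro ⟨h, h0 | h0⟩
        · exact ⟨h, Or.inl (Fin.ext h0)⟩
        · exact ⟨h, Or.inr (Fin.ext h0)⟩
      · rintro ⟨h, h0 | h0⟩ <;> subst h0 <;> exact ⟨h, by simp [hc₀]⟩
    apply aux_acyclic_of_level (fun z => if z.val.1 = c₀ then 0 else 1 + T.dist w₀ z.val.2)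
    rintro ⟨⟨i, x⟩, hv⟩ ⟨⟨j₁, y₁⟩, hm₁⟩ h₁ ⟨⟨j₂, y₂⟩, hm₂⟩ h₂
    simp only [Set.mem_setOf_eq, comap_adj, Function.Embedding.coe_subtype] at h₁ h₂
    -- h₁ : G.Adj (i,x) (j₁,y₁) ∧ f ... ≤ f ...
    have hmem' : ∀ j y, ((j, y) : Fin n × V) ∈ (↑S₀ : Set (Fin n × V))ᶜ → j = c₀ → y = w₀ := by
      intro j y hjy hj
      by_contra hy
      exact hjy (Finset.mem_coe.mpr ((hmem j y).mpr ⟨hj, hy⟩))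
    by_cases hi : i = c₀
    · -- then x = w₀ and f = 0; no neighbor has f ≤ 0
      exfalso
      have hx : x = w₀ := hmem' i x hv hi
      obtain ⟨hadj₁, hf₁⟩ := h₁
      rw [if_pos hi] at hf₁
      by_cases hj : j₁ = c₀
      · have hy : y₁ = w₀ := hmem' j₁ y₁ hm₁ hj
        rw [boxProd_adj] at hadj₁
        rcases hadj₁ with ⟨hs, _⟩ | ⟨ht, _⟩
        · replace hs : (_root_.starGraph n).Adj i j₁ := hs
          rw [hstar_adj] at hs; exact hs.1 (hi.trans hj.symm)
        · replace ht : T.Adj x y₁ := ht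
          subst hx hy; exact T.irrefl ht
      · rw [if_neg hj] at hf₁; omega
    · -- f z = 1 + dist w₀ x
      have hfz : (if ((i,x) : Fin n × V).1 = c₀ then 0 else 1 + T.dist w₀ x) = 1 + T.dist w₀ x :=
        if_neg hi
      -- characterize neighbors u in the set
      have hchar : ∀ (j : Fin n) (y : V), ((j,y) : Fin n × V) ∈ (↑S₀ : Set (Fin n × V))ᶜ →
          G.Adj (i,x) (j,y) →
          (if j = c₀ then 0 else 1 + T.dist w₀ y) ≤ 1 + T.dist w₀ x →
          (x = w₀ ∧ j = c₀ ∧ y = w₀) ∨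
          (j = i ∧ T.Adj x y ∧ T.dist w₀ y < T.dist w₀ x) := by
        intro j y hmemj hadj hfle
        rw [boxProd_adj] at hadj
        rcases hadj with ⟨hs, hxy⟩ | ⟨ht, hij⟩
        · replace hs : (_root_.starGraph n).Adj i j := hs
          replace hxy : x = y := hxy
          rw [hstar_adj] at hs
          have hj : j = c₀ := by
            rcases hs.2 with h | h
            · exact absurd h hi
            · exact h
          have hy : y = w₀ := hmem' j y hmemj hj
          left
          exact ⟨by rw [hxy, hy], hj, hy⟩
        · replace ht : T.Adj x y := ht
          replace hij : i = j := hij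
          right
          have hij' : j = i := hij.symm
          refine ⟨hij', ht, ?_⟩
          have hj : ¬ (j = c₀) := by rw [hij']; exact hi
          rw [if_neg hj] at hfle
          have hle : T.dist w₀ y ≤ T.dist w₀ x := by omega
          have hne := aux_dist_ne hT.IsAcyclic (hreach x) ht
          omega
      obtain ⟨hadj₁, hf₁⟩ := h₁
      obtain ⟨hadj₂, hf₂⟩ := h₂
      rw [hfz] at hf₁ hf₂
      have hc₁ := hchar j₁ y₁ hm₁ hadj₁ hf₁
      have hc₂ := hchar j₂ y₂ hm₂ hadj₂ hf₂
      rcases hc₁ with ⟨hx1, hj1, hy1⟩ | ⟨hj1, ht1, hd1⟩ <;>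
        rcases hc₂ with ⟨hx2, hj2, hy2⟩ | ⟨hj2, ht2, hd2⟩
      · apply Subtype.ext; simp only [Prod.mk.injEq]
        exact ⟨hj1.trans hj2.symm, hy1.trans hy2.symm⟩
      · exfalso; subst hx1; simp [SimpleGraph.dist_self] at hd2
      · exfalso; subst hx2; simp [SimpleGraph.dist_self] at hd1
      · have := aux_closer_unique hT.IsAcyclic (hreach x) ht1 ht2 hd1 hd2
        apply Subtype.ext; simp only [Prod.mk.injEq]
        exact ⟨hj1.trans hj2.symm, this⟩

end Aux

theorem decycling_star_boxProd_tree
    {V : Type*} [Fintype V]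
    (T : SimpleGraph V) (n : ℕ) (hn1 : 1 ≤ n)
    (hcard : Fintype.card V = n + 1) (h2 : 2 ≤ n + 1)
    (hT : T.IsTree) (hstar : IsEmpty (T ≃g _root_.starGraph (n + 1))) :
    decyclingNumber ((_root_.starGraph n).boxProd T) = n := by
  classical
  have hVne : Nonempty V := Fintype.card_pos_iff.mp (by omega)
  -- every vertex has a non-neighbor
  have hstar' : ∀ v : V, ∃ u, u ≠ v ∧ ¬ T.Adj v u := by
    by_contra hcon
    push_neg at hcon
    obtain ⟨v, hv⟩ := hcon
    have hadj_iff : ∀ a b : V, T.Adj a b ↔ a ≠ b ∧ (a = v ∨ b = v) := by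
      intro a b
      constructor
      · intro h
        refine ⟨h.ne, ?_⟩
        by_contra hc
        push_neg at hc
        obtain ⟨ha, hb⟩ := hc
        have hav : T.Adj a v := (hv a ha).symm
        have hvb : T.Adj v b := hv b hb
        have hp₂ : (Walk.cons hav (Walk.cons hvb Walk.nil)).IsPath := by
          simp [Walk.isPath_def, h.ne, ha, hb.symm]
        have heq := hT.IsAcyclic.path_unique (SimpleGraph.Path.singleton h)
          ⟨Walk.cons hav (Walk.cons hvb Walk.nil), hp₂⟩
        have := congrArg (fun p : T.Path a b => (p : T.Walk a b).length) heq
        simp [SimpleGraph.Path.singleton] at this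
      · rintro ⟨hne, h | h⟩
        · subst h; exact hv b hne.symm
        · subst h; exact (hv a hne).symm
    have e₀ : V ≃ Fin (n + 1) := Fintype.equivFinOfCardEq hcard
    have z : Fin (n+1) := ⟨0, by omega⟩
    set e : V ≃ Fin (n + 1) := e₀.trans (Equiv.swap (e₀ v) ⟨0, by omega⟩) with hedef
    have hev : e v = ⟨0, by omega⟩ := by
      simp [hedef, Equiv.swap_apply_left]
    have he0 : ∀ a : V, e a = ⟨0, by omega⟩ ↔ a = v := by
      intro a
      constructor
      · intro h; exact e.injective (h.trans hev.symm)
      · rintro rfl; exact hev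
    refine hstar.false ⟨e, ?_⟩
    intro a b
    show (_root_.starGraph (n+1)).Adj (e a) (e b) ↔ T.Adj a b
    have hne : e a ≠ e b ↔ a ≠ b := by simp
    have h0a : (e a).val = 0 ↔ a = v := by
      rw [← he0 a]; constructor
      · intro h; exact Fin.ext h
      · intro h; rw [h]
    have h0b : (e b).val = 0 ↔ b = v := by
      rw [← he0 b]; constructor
      · intro h; exact Fin.ext h
      · intro h; rw [h]
    show ((e a ≠ e b) ∧ _) ↔ _
    rw [hne, h0a, h0b, hadj_iff a b]
  -- degree bounds
  letI : DecidableRel T.Adj := Classical.decRel _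
  have hdegle : ∀ v : V, T.degree v ≤ n - 1 := by
    intro v
    obtain ⟨u, hu, hnadj⟩ := hstar' v
    have hsub : T.neighborFinset v ⊆ (Finset.univ.erase v).erase u := by
      intro x hx
      rw [SimpleGraph.mem_neighborFinset] at hx
      refine Finset.mem_erase.mpr ⟨?_, Finset.mem_erase.mpr ⟨hx.ne', Finset.mem_univ _⟩⟩
      rintro rfl; exact hnadj hx
    have hc := Finset.card_le_card hsub
    rw [SimpleGraph.card_neighborFinset_eq_degree] at hc
    rw [Finset.card_erase_of_mem (Finset.mem_erase.mpr ⟨hu, Finset.mem_univ _⟩),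
      Finset.card_erase_of_mem (Finset.mem_univ _), Finset.card_univ, hcard] at hc
    omega
  have hdegpos : ∀ v : V, 0 < T.degree v := by
    intro v
    rw [SimpleGraph.degree_pos_iff_exists_adj]
    obtain ⟨u, hu⟩ := Fintype.exists_ne_of_one_lt_card (by omega) v
    obtain ⟨w⟩ := hT.isConnected.preconnected v u
    cases w with
    | nil => exact absurd rfl hu.symm
    | cons h w' => exact ⟨_, h⟩
  -- n ≥ 3
  have hTedges : T.edgeFinset.card = n := by
    have := hT.card_edgeFinset
    omega
  have hsum := T.sum_degrees_eq_twice_card_edges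
  have hdub : ∑ v, T.degree v ≤ (n+1) * (n-1) := by
    calc ∑ v, T.degree v ≤ ∑ _v : V, (n-1) := Finset.sum_le_sum (fun v _ => hdegle v)
      _ = (n+1) * (n-1) := by
          rw [Finset.sum_const, Finset.card_univ, hcard, smul_eq_mul]
  have hn3 : 3 ≤ n := by
    by_contra hc
    push_neg at hc
    interval_cases n <;> omega
  set G := (_root_.starGraph n).boxProd T with hG
  set D := {k | ∃ S : Finset (Fin n × V), S.card = k ∧
    (G.induce ((↑S : Set (Fin n × V))ᶜ)).IsAcyclic} with hD
  have hub : n ∈ D := by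
    obtain ⟨S, h1, h2⟩ := aux_upper T n hn1 hcard hT
    exact ⟨S, h1, h2⟩
  have hlb : ∀ k ∈ D, n ≤ k := by
    rintro k ⟨S, hSk, hSacyc⟩
    by_contra hk
    push_neg at hk
    -- enlarge S to have exactly n - 1 elements
    obtain ⟨S', hSS', hS'card⟩ := Finset.exists_superset_card_eq (s := S) (n := n - 1)
      (by omega) (by
        rw [Fintype.card_prod, Fintype.card_fin, hcard]
        calc n - 1 ≤ n := by omega
          _ ≤ n * (n+1) := Nat.le_mul_of_pos_right n (by omega))
    have hsub : ((↑S' : Set (Fin n × V))ᶜ : Set (Fin n × V)) ⊆ (↑S : Set (Fin n × V))ᶜ := by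
      intro x hx hc
      exact hx (Finset.mem_coe.mpr (hSS' (Finset.mem_coe.mp hc)))
    have hacyc' : (G.induce ((↑S' : Set (Fin n × V))ᶜ)).IsAcyclic :=
      aux_acyclic_mono (G.induceHomOfLE hsub) hSacyc
    exact aux_lower T n hn3 hcard hT hdegle S' hS'card hacyc'
  have : decyclingNumber G = sInf D := rfl
  rw [this]
  exact le_antisymm (Nat.sInf_le hub) (le_csInf ⟨n, hub⟩ hlb)
end

section
/- For arbitrary finite simple graphs G₁ and G₂, the decycling number of their Cartesian product satisfies ∇(G₁ □ G₂) ≥ α'(G₁)·α'(G₂), where α' denotes the matching number. -/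
open SimpleGraph

/-!
Each edge `xy` of `G₁` and each edge `uv` of `G₂` span the 4-cycle `{x, y} × {u, v}` in `G₁ □ G₂`,
so a decycling set contains a vertex of it. For matchings `M₁`, `M₂` these 4-cycles are pairwise
vertex-disjoint, so a decycling set has at least `|M₁| |M₂|` vertices.
-/

namespace SimpleGraph

variable {V W : Type*}

theorem IsAcyclic.eq_of_adj_of_adj {G : SimpleGraph V} (hG : G.IsAcyclic) {a b c d : V}
    (hab : G.Adj a b) (hbc : G.Adj b c) (had : G.Adj a d) (hdc : G.Adj d c) (hac : a ≠ c) :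
    b = d := by
  have hp : (Walk.cons hab (Walk.cons hbc .nil)).IsPath := by simp [hab.ne, hbc.ne, hac]
  have hq : (Walk.cons had (Walk.cons hdc .nil)).IsPath := by simp [had.ne, hdc.ne, hac]
  have := (hG.subsingleton_path a c).elim ⟨_, hp⟩ ⟨_, hq⟩
  simp_all

theorem exists_mem_of_isAcyclic_induce_compl_boxProd {G₁ : SimpleGraph V} {G₂ : SimpleGraph W}
    {S : Set (V × W)} (hS : ((G₁ □ G₂).induce Sᶜ).IsAcyclic) {x y : V} {u v : W}
    (hxy : G₁.Adj x y) (huv : G₂.Adj u v) :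
    ∃ p ∈ S, p.1 ∈ s(x, y) ∧ p.2 ∈ s(u, v) := by
  by_contra! hS'
  have hxu : (x, u) ∈ Sᶜ := fun h ↦ hS' _ h (by simp) (by simp)
  have hyu : (y, u) ∈ Sᶜ := fun h ↦ hS' _ h (by simp) (by simp)
  have hxv : (x, v) ∈ Sᶜ := fun h ↦ hS' _ h (by simp) (by simp)
  have hyv : (y, v) ∈ Sᶜ := fun h ↦ hS' _ h (by simp) (by simp)
  have := hS.eq_of_adj_of_adj
    (a := ⟨_, hxu⟩) (b := ⟨_, hyu⟩) (c := ⟨_, hyv⟩) (d := ⟨_, hxv⟩)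
    (boxProd_adj_left.mpr hxy) (boxProd_adj_right.mpr huv)
    (boxProd_adj_right.mpr huv) (boxProd_adj_left.mpr hxy) (by simp [hxy.ne])
  simp [hxy.ne'] at this

theorem card_mul_card_le_card_of_isAcyclic_induce_compl_boxProd
    {G₁ : SimpleGraph V} {G₂ : SimpleGraph W} {M₁ : Finset (Sym2 V)} {M₂ : Finset (Sym2 W)}
    (hM₁ : ↑M₁ ⊆ G₁.edgeSet) (hM₂ : ↑M₂ ⊆ G₂.edgeSet)
    (hM₁' : (M₁ : Set (Sym2 V)).Pairwise (fun e f => ∀ v, ¬(v ∈ e ∧ v ∈ f)))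
    (hM₂' : (M₂ : Set (Sym2 W)).Pairwise (fun e f => ∀ v, ¬(v ∈ e ∧ v ∈ f)))
    {S : Finset (V × W)} (hS : ((G₁ □ G₂).induce (↑S : Set (V × W))ᶜ).IsAcyclic) :
    M₁.card * M₂.card ≤ S.card := by
  rw [← Finset.card_product]
  refine Finset.card_le_card_of_forall_subsingleton (fun q p ↦ p.1 ∈ q.1 ∧ p.2 ∈ q.2)
    (fun ⟨e₁, e₂⟩ he ↦ ?_) (fun p _ q hq q' hq' ↦ ?_)
  · rw [Finset.mem_product] at he
    induction e₁ using Sym2.ind with | _ x y =>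
    induction e₂ using Sym2.ind with | _ u v =>
    exact exists_mem_of_isAcyclic_induce_compl_boxProd hS (hM₁ he.1) (hM₂ he.2)
  · simp only [Set.mem_ofPred_eq, Finset.mem_product] at hq hq'
    have h₁ : q.1 = q'.1 := by_contra fun h ↦ hM₁' hq.1.1 hq'.1.1 h p.1 ⟨hq.2.1, hq'.2.1⟩
    have h₂ : q.2 = q'.2 := by_contra fun h ↦ hM₂' hq.1.2 hq'.1.2 h p.2 ⟨hq.2.2, hq'.2.2⟩
    exact Prod.ext h₁ h₂

end SimpleGraph

theorem exists_finset_card_eq_matchingNumber {V : Type*} [Fintype V] (G : SimpleGraph V) :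
    ∃ M : Finset (Sym2 V), ↑M ⊆ G.edgeSet ∧
      (M : Set (Sym2 V)).Pairwise (fun e f => ∀ v, ¬(v ∈ e ∧ v ∈ f)) ∧
      M.card = matchingNumber G := by
  classical
  refine Nat.sSup_mem (s := {k | ∃ M : Finset (Sym2 V), ↑M ⊆ G.edgeSet ∧
      (M : Set (Sym2 V)).Pairwise (fun e f => ∀ v, ¬(v ∈ e ∧ v ∈ f)) ∧ M.card = k}) ?_ ?_
  · exact ⟨0, ∅, by simp⟩
  · refine ⟨Fintype.card (Sym2 V), ?_⟩
    rintro k ⟨M, -, -, rfl⟩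
    exact M.card_le_univ

theorem exists_finset_card_eq_decyclingNumber {V : Type*} [Fintype V] (G : SimpleGraph V) :
    ∃ S : Finset V, S.card = decyclingNumber G ∧ (G.induce (↑S : Set V)ᶜ).IsAcyclic := by
  refine Nat.sInf_mem
    (s := {k | ∃ S : Finset V, S.card = k ∧ (G.induce (↑S : Set V)ᶜ).IsAcyclic}) ?_
  refine ⟨_, Finset.univ, rfl, ?_⟩
  have : IsEmpty ↥(↑(Finset.univ : Finset V) : Set V)ᶜ := by simp
  exact .of_subsingleton

theorem decycling_boxProd_ge_matching_mul
    {V₁ V₂ : Type*} [Fintype V₁] [Fintype V₂]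
    (G₁ : SimpleGraph V₁) (G₂ : SimpleGraph V₂) :
    matchingNumber G₁ * matchingNumber G₂ ≤ decyclingNumber (G₁.boxProd G₂) := by
  obtain ⟨M₁, hM₁, hM₁', hcard₁⟩ := exists_finset_card_eq_matchingNumber G₁
  obtain ⟨M₂, hM₂, hM₂', hcard₂⟩ := exists_finset_card_eq_matchingNumber G₂
  obtain ⟨S, hcard, hS⟩ := exists_finset_card_eq_decyclingNumber (G₁.boxProd G₂)
  rw [← hcard₁, ← hcard₂, ← hcard]
  exact card_mul_card_le_card_of_isAcyclic_induce_compl_boxProd hM₁ hM₂ hM₁' hM₂' hS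
end

section
/- If T is a tree, then the decycling number of the prism over T equals the matching number of T, that is, ∇(T □ K₂) = α'(T), where K₂ is the complete graph on two vertices. -/
open SimpleGraph

section AuxLemmas

variable {V : Type*} {G T : SimpleGraph V}

lemma mem_edges_start {y z w : V} (p : G.Walk y z) (hp : p.IsPath) (h : s(y,w) ∈ p.edges) :
    w = p.getVert 1 := by
  cases p with
  | nil => simp at h
  | cons hadj t =>
    rename_i b
    simp only [Walk.edges_cons, List.mem_cons] at h
    rcases h with h | h
    · rw [Sym2.eq_iff] at h
      rcases h with ⟨-, rfl⟩ | ⟨rfl, rfl⟩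
      · simp [Walk.getVert_cons_succ]
      · exact absurd (Walk.start_mem_support t) ((Walk.cons_isPath_iff _ _).mp hp).2
    · exact absurd (Walk.fst_mem_support_of_mem_edges t h)
        ((Walk.cons_isPath_iff _ _).mp hp).2

lemma firstEdge_mem {y z : V} (p : G.Walk y z) (hp : ¬ p.Nil) :
    s(y, p.getVert 1) ∈ p.edges := by
  cases p with
  | nil => simp at hp
  | cons h q => simp [Walk.getVert_cons_succ]

lemma two_nbrs {v : V} {c : G.Walk v v} (hc : c.IsCycle) :
    ∃ a b, a ≠ b ∧ G.Adj v a ∧ G.Adj v b ∧ a ∈ c.support ∧ b ∈ c.support := by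
  have h3 := hc.three_le_length
  cases c with
  | nil => exact absurd rfl hc.ne_nil
  | cons hadj p =>
    rename_i w
    rw [Walk.cons_isCycle_iff] at hc
    obtain ⟨hp, he⟩ := hc
    rw [Walk.length_cons] at h3
    have hnp : ¬ p.Nil := by rw [Walk.nil_iff_length_eq]; omega
    have hnr : ¬ p.reverse.Nil := by
      rw [Walk.nil_iff_length_eq, Walk.length_reverse]; omega
    have hvb : G.Adj v (p.reverse.getVert 1) := Walk.adj_snd hnr
    have hbmem : p.reverse.getVert 1 ∈ p.support := by
      have : p.reverse.getVert 1 ∈ p.reverse.support := by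
        rw [Walk.mem_support_iff_exists_getVert]
        exact ⟨1, rfl, by rw [Walk.length_reverse]; omega⟩
      rwa [Walk.support_reverse, List.mem_reverse] at this
    refine ⟨w, p.reverse.getVert 1, ?_, hadj, hvb, ?_, ?_⟩
    · rintro heq
      apply he
      have : s(v, p.reverse.getVert 1) ∈ p.reverse.edges := firstEdge_mem _ hnr
      rw [← heq] at this
      rwa [Walk.edges_reverse, List.mem_reverse] at this
    · rw [Walk.support_cons]
      exact List.mem_cons_of_mem _ (Walk.start_mem_support p)
    · rw [Walk.support_cons]
      exact List.mem_cons_of_mem _ hbmem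

lemma proj_layer1 : ∀ {x y : V × Fin 2} (p : (T.boxProd (⊤ : SimpleGraph (Fin 2))).Walk x y),
    (∀ a ∈ p.support, a.2 = 1) →
    ∃ q : T.Walk x.1 y.1, q.support = p.support.map Prod.fst ∧
      q.edges = p.edges.map (Sym2.map Prod.fst) ∧ q.length = p.length := by
  intro x y p
  induction p with
  | nil => exact fun _ => ⟨Walk.nil, by simp, by simp, by simp⟩
  | cons h p ih =>
    rename_i a b c
    intro hs
    have ha : a.2 = 1 := hs a (by simp)
    have hb : b.2 = 1 := hs b (by simp [Walk.support_cons, Walk.start_mem_support])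
    have hT : T.Adj a.1 b.1 := by
      rcases h with ⟨h1, -⟩ | ⟨h1, -⟩
      · exact h1
      · exact absurd (ha.trans hb.symm) h1.ne
    obtain ⟨q, hq1, hq2, hq3⟩ := ih (fun z hz => hs z (by simp [Walk.support_cons, hz]))
    exact ⟨Walk.cons hT q, by simp [hq1], by simp [hq2], by simp [hq3]⟩

lemma no_cycle_layer1 (hT : T.IsAcyclic) {x : V × Fin 2}
    {c : (T.boxProd (⊤ : SimpleGraph (Fin 2))).Walk x x} (hc : c.IsCycle)
    (hs : ∀ a ∈ c.support, a.2 = 1) : False := by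
  obtain ⟨q, hq1, hq2, hq3⟩ := proj_layer1 c hs
  have hedge : ∀ e ∈ c.edges, ∀ z, z ∈ e → z ∈ c.support := by
    intro e he z hz
    induction e with
    | h a b =>
      rcases Sym2.mem_iff.mp hz with rfl | rfl
      · exact Walk.fst_mem_support_of_mem_edges c he
      · exact Walk.snd_mem_support_of_mem_edges c he
  have hq : q.IsCycle := by
    rw [Walk.isCycle_def]
    refine ⟨⟨?_⟩, ?_, ?_⟩
    · rw [hq2]
      refine List.Nodup.map_on ?_ hc.isTrail.edges_nodup
      intro e1 h1 e2 h2 heq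
      induction e1 with
      | h a b =>
        induction e2 with
        | h a' b' =>
          simp only [Sym2.map_pair_eq, Sym2.eq_iff] at heq
          have ha : a.2 = 1 := hs a (hedge _ h1 a (by simp))
          have hb : b.2 = 1 := hs b (hedge _ h1 b (by simp))
          have ha' : a'.2 = 1 := hs a' (hedge _ h2 a' (by simp))
          have hb' : b'.2 = 1 := hs b' (hedge _ h2 b' (by simp))
          rcases heq with ⟨e1, e2⟩ | ⟨e1, e2⟩
          · rw [Sym2.eq_iff]
            exact Or.inl ⟨Prod.ext e1 (ha.trans ha'.symm), Prod.ext e2 (hb.trans hb'.symm)⟩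
          · rw [Sym2.eq_iff]
            exact Or.inr ⟨Prod.ext e1 (ha.trans hb'.symm), Prod.ext e2 (hb.trans ha'.symm)⟩
    · intro hnil
      have := hc.three_le_length
      have : q.length = 0 := by rw [hnil]; rfl
      omega
    · rw [hq1, ← List.map_tail]
      refine List.Nodup.map_on ?_ hc.support_nodup  -- name?
      intro z1 h1 z2 h2 heq
      have m1 : z1 ∈ c.support := List.mem_of_mem_tail h1
      have m2 : z2 ∈ c.support := List.mem_of_mem_tail h2
      exact Prod.ext heq ((hs z1 m1).trans (hs z2 m2).symm)
  exact hT q hq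

lemma acyclic_of_cover (hT : T.IsAcyclic) (C : Set V)
    (hcov : ∀ ⦃a b⦄, T.Adj a b → a ∈ C ∨ b ∈ C) :
    ((T.boxProd (⊤ : SimpleGraph (Fin 2))).induce
      {x : V × Fin 2 | ¬(x.1 ∈ C ∧ x.2 = 0)}).IsAcyclic := by
  classical
  intro x c hc
  obtain ⟨emb, hembval⟩ : ∃ emb : (T.boxProd (⊤ : SimpleGraph (Fin 2))).induce
      {x : V × Fin 2 | ¬(x.1 ∈ C ∧ x.2 = 0)} ↪g (T.boxProd (⊤ : SimpleGraph (Fin 2))),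
      ∀ a, emb.toHom a = ↑a := ⟨Embedding.induce _, fun _ => rfl⟩
  have hc' : (c.map emb.toHom).IsCycle :=
    (Walk.map_isCycle_iff_of_injective emb.injective).mpr hc
  set c' := c.map emb.toHom with hc'def
  have hsup : ∀ a ∈ c'.support, ¬(a.1 ∈ C ∧ a.2 = 0) := by
    intro a ha
    rw [hc'def, Walk.support_map] at ha
    obtain ⟨a0, _, rfl⟩ := List.mem_map.mp ha
    have heq := hembval a0
    rw [heq]
    exact a0.2
  have fin2 : ∀ j : Fin 2, j = 0 ∨ j = 1 := by decide
  have hlayer : ∀ a ∈ c'.support, a.2 = 1 := by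
    intro a ha
    rcases fin2 a.2 with h0 | h1
    · exfalso
      have haC : a.1 ∉ C := fun hmem => hsup a ha ⟨hmem, h0⟩
      have hc'' := hc'.rotate ha
      obtain ⟨n1, n2, hne, had1, had2, hm1, hm2⟩ := two_nbrs hc''
      have hsub : ∀ z, z ∈ (c'.rotate a ha).support → z ∈ c'.support := by
        intro z hz
        rw [Walk.support_eq_cons] at hz
        rcases hz with _ | hz
        · exact ha
        · rename_i hz
          exact List.mem_of_mem_tail ((Walk.support_rotate c' a ha).mem_iff.mp hz)
      have key : ∀ n, (T.boxProd (⊤ : SimpleGraph (Fin 2))).Adj a n → n ∈ c'.support →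
          n = (a.1, 1) := by
        intro n hadj hmem
        rcases hadj with ⟨h1, h2⟩ | ⟨h1, h2⟩
        · exfalso
          have hnC : n.1 ∉ C := fun hmem2 => hsup n hmem ⟨hmem2, by rw [← h2, h0]⟩
          rcases hcov h1 with h | h
          · exact haC h
          · exact hnC h
        · rcases fin2 n.2 with hn0 | hn1
          · exact absurd (h0.trans hn0.symm) h1.ne
          · exact Prod.ext h2.symm hn1
      have e1 := key n1 had1 (hsub n1 hm1)
      have e2 := key n2 had2 (hsub n2 hm2)
      exact hne (e1.trans e2.symm)
    · exact h1
  exact no_cycle_layer1 hT hc' hlayer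

lemma hit_quad (S : Set (V × Fin 2))
    (hS : ((T.boxProd (⊤ : SimpleGraph (Fin 2))).induce Sᶜ).IsAcyclic)
    {u v : V} (huv : T.Adj u v) :
    (u,0) ∈ S ∨ (u,1) ∈ S ∨ (v,0) ∈ S ∨ (v,1) ∈ S := by
  by_contra h
  push_neg at h
  obtain ⟨h1, h2, h3, h4⟩ := h
  set P := T.boxProd (⊤ : SimpleGraph (Fin 2)) with hP
  set G' := P.induce Sᶜ with hG'
  let A : ↥(Sᶜ) := ⟨(u,0), h1⟩
  let B : ↥(Sᶜ) := ⟨(v,0), h3⟩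
  let Cc : ↥(Sᶜ) := ⟨(v,1), h4⟩
  let D : ↥(Sᶜ) := ⟨(u,1), h2⟩
  have hAB : G'.Adj A B := Or.inl ⟨huv, rfl⟩
  have hBC : G'.Adj B Cc := Or.inr ⟨by simp [B, Cc], rfl⟩
  have hCD : G'.Adj Cc D := Or.inl ⟨huv.symm, rfl⟩
  have hDA : G'.Adj D A := Or.inr ⟨by simp [D, A], rfl⟩
  have hw : (Walk.cons hAB (Walk.cons hBC (Walk.cons hCD (Walk.cons hDA Walk.nil)))).IsCycle := by
    rw [Walk.cons_isCycle_iff]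
    constructor
    · rw [Walk.isPath_def]
      simp [Walk.support_cons, List.nodup_cons, A, B, Cc, D, Subtype.ext_iff, Prod.ext_iff,
        huv.ne, huv.ne']
    · simp [Walk.edges_cons, A, B, Cc, D, Subtype.ext_iff, Prod.ext_iff, Sym2.eq_iff,
        huv.ne, huv.ne']
  exact hS _ hw

lemma exists_leaf [Fintype V] (hG : G.IsAcyclic) {a b : V} (hab : G.Adj a b) :
    ∃ u v, G.Adj u v ∧ ∀ w, G.Adj v w → w = u := by
  classical
  set L := {n | ∃ (x y : V) (p : G.Walk x y), p.IsPath ∧ p.length = n} with hL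
  have h1 : 1 ∈ L := by
    refine ⟨a, b, Walk.cons hab Walk.nil, ?_, by simp⟩
    simp [Walk.isPath_def, hab.ne]
  have hbdd : BddAbove L := by
    refine ⟨Fintype.card V, ?_⟩
    rintro n ⟨x, y, p, hp, rfl⟩
    have := hp.support_nodup.length_le_card
    rw [Walk.length_support] at this
    omega
  obtain ⟨x, y, p, hp, hlen⟩ : sSup L ∈ L := Nat.sSup_mem ⟨1, h1⟩ hbdd
  have hn1 : 1 ≤ sSup L := le_csSup hbdd h1
  have hnr : ¬ p.reverse.Nil := by
    rw [Walk.nil_iff_length_eq, Walk.length_reverse]; omega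
  have hr : p.reverse.IsPath := hp.reverse
  refine ⟨p.reverse.getVert 1, y, (Walk.adj_snd hnr).symm, ?_⟩
  intro w hw
  have hwmem : w ∈ p.reverse.support := by
    by_contra hwmem
    have hext : (Walk.cons hw.symm p.reverse).IsPath := by
      rw [Walk.cons_isPath_iff]
      exact ⟨hr, hwmem⟩
    have : p.reverse.length + 1 ∈ L := ⟨w, x, _, hext, by simp⟩
    have := le_csSup hbdd this
    rw [Walk.length_reverse, hlen] at this
    omega
  set q := p.reverse.takeUntil w hwmem with hq
  have hqpath : q.IsPath := hr.takeUntil hwmem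
  have hedge : s(y, w) ∈ q.edges := by
    by_contra he
    have hcyc := SimpleGraph.Path.cons_isCycle ⟨q, hqpath⟩ hw.symm
      (show s(w,y) ∉ q.edges by rw [Sym2.eq_swap]; exact he)
    exact hG _ hcyc
  have hwq : w = q.getVert 1 := mem_edges_start q hqpath hedge
  -- now q.getVert 1 = p.reverse.getVert 1
  have hql : 1 ≤ q.length := by
    rcases Nat.eq_zero_or_pos q.length with h0 | h0
    · exfalso
      have := List.ne_nil_of_mem hedge
      have h2 := q.length_edges
      rcases List.eq_nil_or_concat q.edges with hnil | _
      · exact this hnil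
      · rw [← h2] at h0
        have := List.length_pos_iff.mpr this
        omega
    · omega
  have hspec := p.reverse.take_spec hwmem
  have : p.reverse.getVert 1 = q.getVert 1 := by
    conv_lhs => rw [← hspec]
    rw [Walk.getVert_append]
    rcases lt_or_ge 1 q.length with hlt | hle
    · simp [← hq, hlt]
    · have hq1 : q.length = 1 := le_antisymm hle hql
      rw [if_neg (by simp only [← hq]; omega), hq1, Nat.sub_self, Walk.getVert_zero]
      conv_rhs => rw [show (1:ℕ) = q.length from hq1.symm, Walk.getVert_length]
  rw [hwq, this]

lemma konig_forest [Fintype V] (G : SimpleGraph V) (hG : G.IsAcyclic) :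
    ∃ (C : Finset V) (M : Finset (Sym2 V)), ↑M ⊆ G.edgeSet ∧
      (↑M : Set (Sym2 V)).Pairwise (fun e f => ∀ v, ¬(v ∈ e ∧ v ∈ f)) ∧
      (∀ ⦃x y⦄, G.Adj x y → x ∈ C ∨ y ∈ C) ∧ C.card ≤ M.card := by
  classical
  generalize hn : G.edgeSet.ncard = n
  induction n using Nat.strong_induction_on generalizing G with
  | _ n ih =>
  rcases Nat.eq_zero_or_pos n with rfl | hpos
  · refine ⟨∅, ∅, by simp, by simp, ?_, le_refl _⟩
    intro x y hxy
    exfalso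
    have hemp : G.edgeSet = ∅ := (Set.ncard_eq_zero (Set.toFinite _)).mp hn
    have : s(x,y) ∈ G.edgeSet := hxy
    rw [hemp] at this
    exact this
  · obtain ⟨e, he⟩ : G.edgeSet.Nonempty := by
      rw [Set.nonempty_iff_ne_empty]
      intro hemp
      rw [hemp, Set.ncard_empty] at hn
      omega
    revert he
    induction e using Sym2.ind with
    | _ a b =>
    intro he
    rw [mem_edgeSet] at he
    obtain ⟨u, v, huv, hleaf⟩ := exists_leaf hG he
    set G' : SimpleGraph V := G.deleteEdges {e | u ∈ e ∨ v ∈ e} with hG'def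
    have hle : G' ≤ G := deleteEdges_le _
    have hG'acyc : G'.IsAcyclic := by
      intro z c hc
      exact hG _ (hc.mapLe hle)
    have hG'edge : G'.edgeSet = G.edgeSet \ {e | u ∈ e ∨ v ∈ e} := edgeSet_deleteEdges _
    have hssub : G'.edgeSet ⊂ G.edgeSet := by
      rw [hG'edge]
      refine ⟨Set.diff_subset, fun hsub => ?_⟩
      have h1 : s(u,v) ∈ G.edgeSet := G.mem_edgeSet.mpr huv
      have h2 := hsub h1
      rw [Set.mem_diff] at h2
      exact h2.2 (Or.inl (by simp))
    have hlt : G'.edgeSet.ncard < n := by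
      rw [← hn]
      exact Set.ncard_lt_ncard hssub (Set.toFinite _)
    obtain ⟨C', M', hM1, hM2, hcov', hcard⟩ := ih _ hlt G' hG'acyc rfl
    have hsv_notmem : s(u,v) ∉ M' := by
      intro hmem
      have := hM1 hmem
      rw [hG'edge, Set.mem_diff] at this
      exact this.2 (Or.inl (by simp))
    refine ⟨insert u C', insert (s(u,v)) M', ?_, ?_, ?_, ?_⟩
    · rw [Finset.coe_insert]
      exact Set.insert_subset (G.mem_edgeSet.mpr huv) (hM1.trans (hG'edge ▸ Set.diff_subset))
    · rw [Finset.coe_insert]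
      refine hM2.insert ?_
      intro f hf _
      have hfG' := hM1 hf
      rw [hG'edge, Set.mem_diff] at hfG'
      have huf : u ∉ f := fun h => hfG'.2 (Or.inl h)
      have hvf : v ∉ f := fun h => hfG'.2 (Or.inr h)
      constructor
      · rintro z ⟨hz1, hz2⟩
        rcases Sym2.mem_iff.mp hz1 with rfl | rfl
        · exact huf hz2
        · exact hvf hz2
      · rintro z ⟨hz1, hz2⟩
        rcases Sym2.mem_iff.mp hz2 with rfl | rfl
        · exact huf hz1
        · exact hvf hz1
    · intro x y hxy
      by_cases hxu : x = u
      · exact Or.inl (by rw [hxu]; exact Finset.mem_insert_self u C')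
      by_cases hyu : y = u
      · exact Or.inr (by rw [hyu]; exact Finset.mem_insert_self u C')
      by_cases hxv : x = v
      · exact absurd (hleaf y (hxv ▸ hxy)) hyu
      by_cases hyv : y = v
      · exact absurd (hleaf x (hyv ▸ hxy.symm)) hxu
      · have hG'adj : G'.Adj x y := by
          rw [hG'def, deleteEdges_adj]
          refine ⟨hxy, ?_⟩
          rintro (h | h) <;> rcases Sym2.mem_iff.mp h with rfl | rfl <;> tauto
        rcases hcov' hG'adj with h | h
        · exact Or.inl (Finset.mem_insert_of_mem h)
        · exact Or.inr (Finset.mem_insert_of_mem h)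
    · calc (insert u C').card ≤ C'.card + 1 := Finset.card_insert_le _ _
        _ ≤ M'.card + 1 := by omega
        _ = (insert (s(u,v)) M').card := (Finset.card_insert_of_notMem hsv_notmem).symm

end AuxLemmas

theorem decycling_prism_eq_matchingNumber
    {V : Type*} [Fintype V]
    (T : SimpleGraph V) (hT : T.IsTree) :
    decyclingNumber (T.boxProd (⊤ : SimpleGraph (Fin 2))) = matchingNumber T := by
  classical
  have hbddM : BddAbove {k | ∃ M : Finset (Sym2 V), ↑M ⊆ T.edgeSet ∧
      (M : Set (Sym2 V)).Pairwise (fun e f => ∀ v, ¬(v ∈ e ∧ v ∈ f)) ∧ M.card = k} := by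
    refine ⟨Fintype.card (Sym2 V), ?_⟩
    rintro m ⟨M, -, -, rfl⟩
    exact Finset.card_le_univ M
  have hMne : (0 : ℕ) ∈ {k | ∃ M : Finset (Sym2 V), ↑M ⊆ T.edgeSet ∧
      (M : Set (Sym2 V)).Pairwise (fun e f => ∀ v, ¬(v ∈ e ∧ v ∈ f)) ∧ M.card = k} :=
    ⟨∅, by simp, by simp, rfl⟩
  apply le_antisymm
  · -- decyclingNumber ≤ matchingNumber, via König for forests
    obtain ⟨C, M, hM1, hM2, hcov, hcard⟩ := konig_forest T hT.IsAcyclic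
    set S : Finset (V × Fin 2) := C.image (fun u => (u, (0 : Fin 2))) with hS
    have hScard : S.card = C.card :=
      Finset.card_image_of_injective _ (fun a b h => (Prod.mk.injEq _ _ _ _ ▸ h).1)
    have hseteq : ((↑S : Set (V × Fin 2))ᶜ) = {x : V × Fin 2 | ¬(x.1 ∈ (↑C : Set V) ∧ x.2 = 0)} := by
      ext ⟨x1, x2⟩
      simp only [hS, Set.mem_compl_iff, Finset.coe_image, Set.mem_image, Finset.mem_coe,
        Set.mem_setOf_eq, Prod.mk.injEq, not_exists, not_and]
      constructor
      · intro h hx1 hx2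
        exact h x1 hx1 rfl hx2.symm
      · rintro h z hz rfl rfl
        exact h hz rfl
    have hacyc : ((T.boxProd (⊤ : SimpleGraph (Fin 2))).induce
        ((↑S : Set (V × Fin 2))ᶜ)).IsAcyclic := by
      rw [hseteq]
      exact acyclic_of_cover hT.IsAcyclic (↑C : Set V)
        (fun a b h => by rcases hcov h with h1 | h1
                         · exact Or.inl h1
                         · exact Or.inr h1)
    have h1 : decyclingNumber (T.boxProd (⊤ : SimpleGraph (Fin 2))) ≤ C.card :=
      Nat.sInf_le ⟨S, hScard, hacyc⟩
    have h2 : M.card ≤ matchingNumber T := le_csSup hbddM ⟨M, hM1, hM2, rfl⟩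
    calc decyclingNumber (T.boxProd (⊤ : SimpleGraph (Fin 2))) ≤ C.card := h1
      _ ≤ M.card := hcard
      _ ≤ matchingNumber T := h2
  · -- matchingNumber ≤ decyclingNumber
    have hempty : ((T.boxProd (⊤ : SimpleGraph (Fin 2))).induce
        ((↑(Finset.univ : Finset (V × Fin 2)) : Set (V × Fin 2))ᶜ)).IsAcyclic := by
      intro v c hc
      have := v.2
      simp at this
    refine le_csInf ⟨(Finset.univ : Finset (V × Fin 2)).card, Finset.univ, rfl, hempty⟩ ?_
    rintro k ⟨S, rfl, hacyc⟩
    apply csSup_le ⟨0, hMne⟩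
    rintro m ⟨M, hM1, hM2, rfl⟩
    have hchoice : ∀ e ∈ M, ∃ x ∈ S, x.1 ∈ e := by
      intro e he
      have heE : e ∈ T.edgeSet := hM1 he
      revert heE
      induction e using Sym2.ind with
      | _ a b =>
      intro heE
      rw [mem_edgeSet] at heE
      rcases hit_quad (↑S : Set (V × Fin 2)) hacyc heE with h | h | h | h
      · exact ⟨(a, 0), h, by simp⟩
      · exact ⟨(a, 1), h, by simp⟩
      · exact ⟨(b, 0), h, by simp⟩
      · exact ⟨(b, 1), h, by simp⟩
    choose f hf1 hf2 using hchoice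
    haveI : Nonempty (V × Fin 2) := ⟨((hT.isConnected.nonempty).some, 0)⟩
    haveI : Inhabited (V × Fin 2) := Classical.inhabited_of_nonempty this
    refine Finset.card_le_card_of_injOn (fun e => if he : e ∈ M then f e he else default)
      ?_ ?_
    · intro e he
      show (if h : e ∈ M then f e h else default) ∈ S
      rw [dif_pos (Finset.mem_coe.mp he)]
      exact hf1 e he
    · intro e1 he1 e2 he2 heq
      simp only [Finset.mem_coe] at he1 he2
      simp only [he1, he2, dif_pos] at heq
      by_contra hne
      exact hM2 he1 he2 hne (f e1 he1).1 ⟨hf2 e1 he1, heq ▸ hf2 e2 he2⟩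
end

section
/- If T is a tree and W ⊆ V(T) is a vertex cover of T, then the set W × {a} ⊆ V(T) × V(K₂), where a is one of the two vertices of K₂, is a decycling set of T □ K₂; in particular, the subgraph of T □ K₂ induced by the complement of W × {a} is acyclic. -/
/-!
A vertex `(v, a)` that survives the deletion has `v ∉ W`, so every `T`-neighbour of `v` lies in `W`
and the only neighbour left to `(v, a)` is `(v, 1 - a)`. A vertex of degree at most one lies on no
cycle, so every cycle stays in the other layer, which is a copy of the forest `T`.
-/

open SimpleGraph

namespace SimpleGraph

variable {V : Type*} {G : SimpleGraph V}

lemma Walk.IsCycle.neighborSet_nontrivial {u x : V} {c : G.Walk u u} (hc : c.IsCycle)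
    (hx : x ∈ c.support) : (G.neighborSet x).Nontrivial := by
  classical
  have hr := hc.rotate hx
  exact ⟨_, Walk.adj_snd hr.not_nil, _, (Walk.adj_penultimate hr.not_nil).symm,
    hr.snd_ne_penultimate⟩

lemma isAcyclic_of_induce_of_neighborSet_subsingleton {s : Set V}
    (hs : (G.induce s).IsAcyclic) (hleaf : ∀ v ∉ s, (G.neighborSet v).Subsingleton) :
    G.IsAcyclic := by
  intro u c hc
  have hsupp : ∀ x ∈ c.support, x ∈ s := fun x hx => by
    by_contra hxs
    exact Set.not_nontrivial_iff.2 (hleaf x hxs) (hc.neighborSet_nontrivial hx)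
  exact hs (c.induce s hsupp) (Walk.IsCycle.of_map (by rwa [Walk.map_induce]))

end SimpleGraph

section Prism

variable {V : Type*} {T : SimpleGraph V} {W : Set V} {a : Fin 2}

abbrev layerCopy (W : Set V) (a : Fin 2) : Set (V × Fin 2) := {p | p.1 ∈ W ∧ p.2 = a}

abbrev prismDeleteLayerCopy (T : SimpleGraph V) (W : Set V) (a : Fin 2) :
    SimpleGraph ↥(layerCopy W a)ᶜ :=
  (T.boxProd (⊤ : SimpleGraph (Fin 2))).induce (layerCopy W a)ᶜ

lemma prismDeleteLayerCopy_neighborSet_subsingleton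
    (hW : ∀ ⦃u v : V⦄, T.Adj u v → u ∈ W ∨ v ∈ W) (p : ↥(layerCopy W a)ᶜ) (hp : p.1.2 = a) :
    ((prismDeleteLayerCopy T W a).neighborSet p).Subsingleton := by
  obtain ⟨⟨v, b⟩, hpW⟩ := p
  dsimp only at hp
  subst b
  have hv : v ∉ W := fun h => hpW ⟨h, rfl⟩
  have hnbr : ∀ q ∈ (prismDeleteLayerCopy T W a).neighborSet ⟨(v, a), hpW⟩,
      q.1.1 = v ∧ q.1.2 ≠ a := by
    rintro ⟨⟨u, b⟩, hq⟩ hadj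
    rcases boxProd_adj.1 (induce_adj.1 hadj) with ⟨hTvu, rfl⟩ | ⟨hab, rfl⟩
    · exact ((hW hTvu).elim hv fun hu => hq ⟨hu, rfl⟩).elim
    · exact ⟨rfl, hab.ne.symm⟩
  intro q hq r hr
  obtain ⟨hq₁, hq₂⟩ := hnbr q hq
  obtain ⟨hr₁, hr₂⟩ := hnbr r hr
  exact Subtype.ext (Prod.ext (hq₁.trans hr₁.symm) (by omega))

lemma isAcyclic_prismDeleteLayerCopy_induce_layer (hT : T.IsAcyclic) :
    ((prismDeleteLayerCopy T W a).induce {p | p.1.2 ≠ a}).IsAcyclic := by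
  have layer_eq : ∀ p q : ↥{p : ↥(layerCopy W a)ᶜ | p.1.2 ≠ a}, p.1.1.2 = q.1.1.2 := by
    intro p q
    have hp : p.1.1.2 ≠ a := p.2
    have hq : q.1.1.2 ≠ a := q.2
    omega
  refine hT.comap ⟨fun p => p.1.1.1, fun {p q} hpq => ?_⟩ fun p q hpq => ?_
  · rcases boxProd_adj.1 (induce_adj.1 (induce_adj.1 hpq)) with ⟨hTpq, _⟩ | ⟨hpq₂, _⟩
    · exact hTpq
    · exact (hpq₂.ne (layer_eq p q)).elim
  · exact Subtype.ext (Subtype.ext (Prod.ext hpq (layer_eq p q)))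

end Prism

theorem vertexCover_gives_decyclingSet_of_prism_general
    {V : Type*}
    (T : SimpleGraph V) (hT : T.IsTree)
    (W : Set V) (hW : ∀ ⦃u v : V⦄, T.Adj u v → u ∈ W ∨ v ∈ W)
    (a : Fin 2) :
    ((T.boxProd (⊤ : SimpleGraph (Fin 2))).induce
      ({p : V × Fin 2 | p.1 ∈ W ∧ p.2 = a} : Set (V × Fin 2))ᶜ).IsAcyclic :=
  isAcyclic_of_induce_of_neighborSet_subsingleton
    (isAcyclic_prismDeleteLayerCopy_induce_layer hT.isAcyclic)
    fun p hp => prismDeleteLayerCopy_neighborSet_subsingleton hW p (not_not.1 hp)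

theorem vertexCover_gives_decyclingSet_of_prism
    {V : Type*} [Fintype V]
    (T : SimpleGraph V) (hT : T.IsTree)
    (W : Set V) (hW : ∀ ⦃u v : V⦄, T.Adj u v → u ∈ W ∨ v ∈ W)
    (a : Fin 2) :
    ((T.boxProd (⊤ : SimpleGraph (Fin 2))).induce
      ({p : V × Fin 2 | p.1 ∈ W ∧ p.2 = a} : Set (V × Fin 2))ᶜ).IsAcyclic :=
  vertexCover_gives_decyclingSet_of_prism_general T hT W hW a
end

section
/- If G₁ and G₂ are graphs with matchings M₁ ⊆ E(G₁) and M₂ ⊆ E(G₂), and V₁, V₂ denote the sets of endvertices of the edges of M₁ and M₂ respectively, then every decycling set S of G₁ □ G₂ satisfies |S| ≥ |M₁|·|M₂|; indeed for each pair of edges e₁ ∈ M₁, e₂ ∈ M₂, the four vertices (endpoints of e₁) × (endpoints of e₂) induce a 4-cycle in G₁ □ G₂, and these 4-cycles are pairwise vertex-disjoint. -/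
open SimpleGraph

/-! A vertex set meeting every cycle meets each square `e₁ × e₂` (for `e₁ ∈ M₁`, `e₂ ∈ M₂`),
since `s(a, b) × s(c, d)` induces the 4-cycle `(a, c) — (b, c) — (b, d) — (a, d)` in
`G₁ □ G₂`. Because `M₁` and `M₂` are matchings, these `|M₁|·|M₂|` squares are pairwise
disjoint, so a decycling set has at least that many vertices. -/

theorem Finset.card_le_card_of_pairwiseDisjoint_of_inter_nonempty {ι α : Type*}
    {s : Finset ι} {t : Finset α} {f : ι → Set α} (hf : (s : Set ι).PairwiseDisjoint f)
    (ht : ∀ i ∈ s, ((t : Set α) ∩ f i).Nonempty) : s.card ≤ t.card := by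
  refine card_le_card_of_forall_subsingleton (fun i x => x ∈ f i) (fun i hi => ht i hi) ?_
  rintro x - i ⟨hi, hxi⟩ j ⟨hj, hxj⟩
  exact hf.elim_set hi hj x hxi hxj

namespace SimpleGraph

variable {V W : Type*} {G : SimpleGraph V} {H : SimpleGraph W}

theorem not_isAcyclic_cycleGraph (n : ℕ) : ¬(cycleGraph (n + 3)).IsAcyclic :=
  fun h => h _ cycleGraph.isCycle_cycle

theorem inter_nonempty_of_isAcyclic_induce_compl {s t : Set V}
    (hs : (G.induce sᶜ).IsAcyclic) (ht : ¬(G.induce t).IsAcyclic) : (s ∩ t).Nonempty := by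
  by_contra hst
  have hts : t ⊆ sᶜ := fun x hxt hxs => hst ⟨x, hxs, hxt⟩
  exact ht (hs.embedding (G.induceHomOfLE hts))

theorem boxProd_induce_mk_iso_cycleGraph_four {a b : V} {c d : W}
    (hab : G.Adj a b) (hcd : H.Adj c d) :
    Nonempty ((G □ H).induce {p | p.1 ∈ s(a, b) ∧ p.2 ∈ s(c, d)} ≃g cycleGraph 4) := by
  set Q : Set (V × W) := {p | p.1 ∈ s(a, b) ∧ p.2 ∈ s(c, d)}
  let f : Fin 4 → Q := ![⟨(a, c), by simp [Q]⟩, ⟨(b, c), by simp [Q]⟩,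
    ⟨(b, d), by simp [Q]⟩, ⟨(a, d), by simp [Q]⟩]
  have hinj : f.Injective := by
    intro i j h
    fin_cases i <;> fin_cases j <;>
      simp_all [f, Subtype.ext_iff, hab.ne, hcd.ne, hab.ne.symm, hcd.ne.symm]
  have hsurj : f.Surjective := by
    rintro ⟨⟨x, y⟩, hx, hy⟩
    simp only [Sym2.mem_iff] at hx hy
    rcases hx with rfl | rfl <;> rcases hy with rfl | rfl
    exacts [⟨0, rfl⟩, ⟨3, rfl⟩, ⟨1, rfl⟩, ⟨2, rfl⟩]
  refine ⟨(RelIso.mk (Equiv.ofBijective f ⟨hinj, hsurj⟩) fun {i j} => ?_).symm⟩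
  fin_cases i <;> fin_cases j <;>
    simp [f, Equiv.ofBijective, comap_adj, boxProd_adj, cycleGraph_adj, hab, hcd, hab.symm,
      hcd.symm, hab.ne, hcd.ne, hab.ne.symm, hcd.ne.symm] <;> decide

theorem boxProd_induce_mem_iso_cycleGraph_four {e₁ : Sym2 V} {e₂ : Sym2 W}
    (he₁ : e₁ ∈ G.edgeSet) (he₂ : e₂ ∈ H.edgeSet) :
    Nonempty ((G □ H).induce {p | p.1 ∈ e₁ ∧ p.2 ∈ e₂} ≃g cycleGraph 4) := by
  induction e₁ using Sym2.ind
  induction e₂ using Sym2.ind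
  exact boxProd_induce_mk_iso_cycleGraph_four he₁ he₂

end SimpleGraph

theorem Set.pairwiseDisjoint_setOf_mem_mem {V W : Type*} {M₁ : Set (Sym2 V)}
    {M₂ : Set (Sym2 W)} (hM₁ : M₁.Pairwise fun e f => ∀ v, ¬(v ∈ e ∧ v ∈ f))
    (hM₂ : M₂.Pairwise fun e f => ∀ w, ¬(w ∈ e ∧ w ∈ f)) :
    (M₁ ×ˢ M₂).PairwiseDisjoint fun e => {p : V × W | p.1 ∈ e.1 ∧ p.2 ∈ e.2} := by
  rintro ⟨e₁, e₂⟩ ⟨he₁, he₂⟩ ⟨f₁, f₂⟩ ⟨hf₁, hf₂⟩ hne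
  refine Set.disjoint_left.mpr fun p ⟨hpe₁, hpe₂⟩ ⟨hpf₁, hpf₂⟩ => ?_
  by_cases h₁ : e₁ = f₁
  · exact hM₂ he₂ hf₂ (fun h₂ => hne (Prod.ext h₁ h₂)) p.2 ⟨hpe₂, hpf₂⟩
  · exact hM₁ he₁ hf₁ h₁ p.1 ⟨hpe₁, hpf₁⟩

theorem decyclingSet_ge_matchings_mul_of_disjoint_fourCycles_general
    {V₁ V₂ : Type*}
    (G₁ : SimpleGraph V₁) (G₂ : SimpleGraph V₂)
    (M₁ : Finset (Sym2 V₁)) (M₂ : Finset (Sym2 V₂))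
    (hM₁ : ↑M₁ ⊆ G₁.edgeSet)
    (hM₁' : (M₁ : Set (Sym2 V₁)).Pairwise (fun e f => ∀ v, ¬(v ∈ e ∧ v ∈ f)))
    (hM₂ : ↑M₂ ⊆ G₂.edgeSet)
    (hM₂' : (M₂ : Set (Sym2 V₂)).Pairwise (fun e f => ∀ v, ¬(v ∈ e ∧ v ∈ f))) :
    (∀ S : Finset (V₁ × V₂),
        ((G₁.boxProd G₂).induce ((↑S : Set (V₁ × V₂))ᶜ)).IsAcyclic →
        M₁.card * M₂.card ≤ S.card) ∧
    (∀ e₁ ∈ M₁, ∀ e₂ ∈ M₂,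
        Nonempty (((G₁.boxProd G₂).induce
          {p : V₁ × V₂ | p.1 ∈ e₁ ∧ p.2 ∈ e₂}) ≃g SimpleGraph.cycleGraph 4)) ∧
    (∀ e₁ ∈ M₁, ∀ e₂ ∈ M₂, ∀ f₁ ∈ M₁, ∀ f₂ ∈ M₂, (e₁, e₂) ≠ (f₁, f₂) →
        Disjoint {p : V₁ × V₂ | p.1 ∈ e₁ ∧ p.2 ∈ e₂}
          {p : V₁ × V₂ | p.1 ∈ f₁ ∧ p.2 ∈ f₂}) := by
  classical
  have squares_disjoint := Set.pairwiseDisjoint_setOf_mem_mem hM₁' hM₂'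
  have squares_iso : ∀ e₁ ∈ M₁, ∀ e₂ ∈ M₂, Nonempty ((G₁.boxProd G₂).induce
      {p : V₁ × V₂ | p.1 ∈ e₁ ∧ p.2 ∈ e₂} ≃g cycleGraph 4) :=
    fun e₁ he₁ e₂ he₂ => boxProd_induce_mem_iso_cycleGraph_four (hM₁ he₁) (hM₂ he₂)
  refine ⟨fun S hS => ?_, squares_iso, fun e₁ he₁ e₂ he₂ f₁ hf₁ f₂ hf₂ hne =>
    squares_disjoint ⟨he₁, he₂⟩ ⟨hf₁, hf₂⟩ hne⟩
  rw [← Finset.card_product]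
  refine Finset.card_le_card_of_pairwiseDisjoint_of_inter_nonempty
    (by rwa [Finset.coe_product]) fun e he => ?_
  rw [Finset.mem_product] at he
  obtain ⟨ψ⟩ := squares_iso e.1 he.1 e.2 he.2
  exact inter_nonempty_of_isAcyclic_induce_compl hS
    (ψ.isAcyclic_iff.not.mpr (not_isAcyclic_cycleGraph 1))

theorem decyclingSet_ge_matchings_mul_of_disjoint_fourCycles
    {V₁ V₂ : Type*} [Fintype V₁] [Fintype V₂]
    (G₁ : SimpleGraph V₁) (G₂ : SimpleGraph V₂)
    (M₁ : Finset (Sym2 V₁)) (M₂ : Finset (Sym2 V₂))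
    (hM₁ : ↑M₁ ⊆ G₁.edgeSet)
    (hM₁' : (M₁ : Set (Sym2 V₁)).Pairwise (fun e f => ∀ v, ¬(v ∈ e ∧ v ∈ f)))
    (hM₂ : ↑M₂ ⊆ G₂.edgeSet)
    (hM₂' : (M₂ : Set (Sym2 V₂)).Pairwise (fun e f => ∀ v, ¬(v ∈ e ∧ v ∈ f))) :
    (∀ S : Finset (V₁ × V₂),
        ((G₁.boxProd G₂).induce ((↑S : Set (V₁ × V₂))ᶜ)).IsAcyclic →
        M₁.card * M₂.card ≤ S.card) ∧
    (∀ e₁ ∈ M₁, ∀ e₂ ∈ M₂,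
        Nonempty (((G₁.boxProd G₂).induce
          {p : V₁ × V₂ | p.1 ∈ e₁ ∧ p.2 ∈ e₂}) ≃g SimpleGraph.cycleGraph 4)) ∧
    (∀ e₁ ∈ M₁, ∀ e₂ ∈ M₂, ∀ f₁ ∈ M₁, ∀ f₂ ∈ M₂, (e₁, e₂) ≠ (f₁, f₂) →
        Disjoint {p : V₁ × V₂ | p.1 ∈ e₁ ∧ p.2 ∈ e₂}
          {p : V₁ × V₂ | p.1 ∈ f₁ ∧ p.2 ∈ f₂}) :=
  decyclingSet_ge_matchings_mul_of_disjoint_fourCycles_general G₁ G₂ M₁ M₂ hM₁ hM₁' hM₂ hM₂'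
end
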